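/- arXiv:1210.0923 — 7 statements merged into one kernel-verified Lean document; each statement's English description precedes it below -/
import Mathlib

section
/- Let v > k ≥ 1 with 2k ≤ v and k dividing C(v,2). Then μ(1,k,v) = v − 1: there exists a multiset of k-subsets of a v-set in which the v points have frequencies exactly 0, 1, ..., v−1, and no 1-adesign can have maximum point frequency less than v − 1. -/
open Finset

/-- Frequency of a subset `T` in a multiset of blocks `A`: total multiplicity of
blocks containing `T`. -/
def freq (A : Multiset (Finset ℕ)) (T : Finset ℕ) : ℕ :=
  Multiset.card (A.filter (fun K => T ⊆ K))

/-- A `t`-adesign `A(t,k,v)`: a multiset of `k`-subsets of `{0,...,v-1}` in which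
all `t`-subsets have pairwise distinct frequencies. -/
def IsAdesign (t k v : ℕ) (A : Multiset (Finset ℕ)) : Prop :=
  (∀ K ∈ A, K ⊆ Finset.range v ∧ K.card = k) ∧
  ∀ T₁ ∈ (Finset.range v).powersetCard t, ∀ T₂ ∈ (Finset.range v).powersetCard t,
    freq A T₁ = freq A T₂ → T₁ = T₂

/-- `mu t k v`: the smallest possible maximum `t`-subset frequency over all
`t`-adesigns `A(t,k,v)`. -/
noncomputable def mu (t k v : ℕ) : ℕ :=
  sInf {m | ∃ A, IsAdesign t k v A ∧ ∀ T ∈ (Finset.range v).powersetCard t, freq A T ≤ m}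

/- Auxiliary development -/

lemma T_succ (i : ℕ) : (i+1).choose 2 = i.choose 2 + i := by
  rw [Nat.choose_succ_succ]; simp [Nat.choose_one_right]; ring

lemma mod_inj (b T j1 j2 : ℕ) (h1 : j1 < b) (h2 : j2 < b)
    (h : (T + j1) % b = (T + j2) % b) : j1 = j2 := by
  have hm : j1 % b = j2 % b := Nat.ModEq.add_left_cancel' T h
  rwa [Nat.mod_eq_of_lt h1, Nat.mod_eq_of_lt h2] at hm

lemma decomp (v : ℕ) : ∀ p < v.choose 2, ∃ i < v, ∃ j < i, p = i.choose 2 + j := by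
  induction v with
  | zero => simp
  | succ n ih =>
    intro p hp
    rcases lt_or_ge p (n.choose 2) with h | h
    · obtain ⟨i, hi, j, hj, he⟩ := ih p h
      exact ⟨i, hi.trans (Nat.lt_succ_self n), j, hj, he⟩
    · refine ⟨n, Nat.lt_succ_self n, p - n.choose 2, ?_, ?_⟩ <;>
      · rw [T_succ] at hp; omega

def pt (v p : ℕ) : ℕ := ((range v).filter (fun i => (i+1).choose 2 ≤ p)).card

lemma pt_spec (v i j : ℕ) (hi : i < v) (hj : j < i) : pt v (i.choose 2 + j) = i := by
  unfold pt
  have he : (range v).filter (fun i' => (i'+1).choose 2 ≤ i.choose 2 + j) = range i := by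
    ext i'
    simp only [mem_filter, mem_range]
    constructor
    · rintro ⟨_, h⟩
      by_contra hc
      push_neg at hc
      have h2 : (i+1).choose 2 ≤ (i'+1).choose 2 := Nat.choose_le_choose 2 (by omega)
      rw [T_succ] at h2
      omega
    · intro h
      refine ⟨h.trans hi, ?_⟩
      have h2 : (i'+1).choose 2 ≤ i.choose 2 := Nat.choose_le_choose 2 (by omega)
      omega
  rw [he, card_range]

def blk (b v r : ℕ) : Finset ℕ :=
  (range v).filter (fun i => ∃ j < i, (i.choose 2 + j) % b = r)

def Adm (b v : ℕ) : Multiset (Finset ℕ) := (Multiset.range b).map (blk b v)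

lemma mem_blk {b v r i : ℕ} :
    i ∈ blk b v r ↔ i < v ∧ ∃ j < i, (i.choose 2 + j) % b = r := by
  simp [blk]

lemma pos_eq (k b r : ℕ) (hb : 0 < b) (hr : r < b) :
    (range (k*b)).filter (fun p => p % b = r) = (range k).image (fun j => j*b + r) := by
  ext p
  simp only [mem_filter, mem_range, mem_image]
  constructor
  · rintro ⟨hp, hm⟩
    refine ⟨p / b, by rwa [Nat.div_lt_iff_lt_mul hb], ?_⟩
    have := Nat.div_add_mod' p b
    omega
  · rintro ⟨j, hj, rfl⟩
    constructor
    · calc j*b + r < (j+1)*b := by rw [add_mul, one_mul]; omega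
        _ ≤ k*b := Nat.mul_le_mul_right b hj
    · rw [add_comm, Nat.add_mul_mod_self_right, Nat.mod_eq_of_lt hr]

lemma pos_card (k b r : ℕ) (hb : 0 < b) (hr : r < b) :
    ((range (k*b)).filter (fun p => p % b = r)).card = k := by
  rw [pos_eq k b r hb hr, card_image_of_injective _ (fun j1 j2 h => by
    have : j1 * b = j2 * b := by omega
    exact Nat.eq_of_mul_eq_mul_right hb this), card_range]

lemma freq_Adm (b v x : ℕ) :
    freq (Adm b v) {x} = ((range b).filter (fun r => x ∈ blk b v r)).card := by
  unfold freq Adm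
  rw [Multiset.filter_map, Multiset.card_map]
  rw [Finset.card_filter]
  simp [Finset.sum_boole, Function.comp, singleton_subset_iff]
  rfl

lemma freq_Adm_eq (b v x : ℕ) (hb : 0 < b) (hx : x < v) (hxb : x ≤ b) :
    freq (Adm b v) {x} = x := by
  rw [freq_Adm]
  have he : (range b).filter (fun r => x ∈ blk b v r)
      = (range x).image (fun j => (x.choose 2 + j) % b) := by
    ext r
    simp only [mem_filter, mem_range, mem_image, mem_blk]
    constructor
    · rintro ⟨_, _, j, hj, he⟩
      exact ⟨j, hj, he⟩
    · rintro ⟨j, hj, rfl⟩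
      exact ⟨Nat.mod_lt _ hb, hx, j, hj, rfl⟩
  rw [he, card_image_of_injOn, card_range]
  intro j1 h1 j2 h2 h
  simp only [coe_range, Set.mem_Iio] at h1 h2
  exact mod_inj b _ j1 j2 (by omega) (by omega) h

lemma card_blk (k b v r : ℕ) (hb : 0 < b) (hr : r < b) (hvb : v ≤ b + 1)
    (hkb : k * b = v.choose 2) : (blk b v r).card = k := by
  have he : blk b v r = ((range (k*b)).filter (fun p => p % b = r)).image (pt v) := by
    ext i
    simp only [mem_blk, mem_image, mem_filter, mem_range]
    constructor
    · rintro ⟨hi, j, hj, hm⟩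
      refine ⟨i.choose 2 + j, ⟨?_, hm⟩, pt_spec v i j hi hj⟩
      have h1 : (i+1).choose 2 ≤ v.choose 2 := Nat.choose_le_choose 2 (by omega)
      rw [T_succ] at h1
      omega
    · rintro ⟨p, ⟨hp, hm⟩, rfl⟩
      rw [hkb] at hp
      obtain ⟨i, hi, j, hj, rfl⟩ := decomp v p hp
      rw [pt_spec v i j hi hj]
      exact ⟨hi, j, hj, hm⟩
  rw [he, card_image_of_injOn, pos_card k b r hb hr]
  intro p1 hp1 p2 hp2 h
  simp only [coe_filter, mem_range, Set.mem_setOf_eq] at hp1 hp2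
  rw [hkb] at hp1 hp2
  obtain ⟨hp1, hm1⟩ := hp1
  obtain ⟨hp2, hm2⟩ := hp2
  obtain ⟨i1, hi1, j1, hj1, rfl⟩ := decomp v p1 hp1
  obtain ⟨i2, hi2, j2, hj2, rfl⟩ := decomp v p2 hp2
  rw [pt_spec v i1 j1 hi1 hj1, pt_spec v i2 j2 hi2 hj2] at h
  subst h
  rw [mod_inj b _ j1 j2 (by omega) (by omega) (hm1.trans hm2.symm)]

lemma pcard_one {v : ℕ} {T : Finset ℕ} (hT : T ∈ (range v).powersetCard 1) :
    ∃ x < v, T = {x} := by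
  rw [mem_powersetCard] at hT
  obtain ⟨x, rfl⟩ := Finset.card_eq_one.mp hT.2
  exact ⟨x, mem_range.mp (hT.1 (mem_singleton_self x)), rfl⟩

lemma singleton_mem_pcard {v x : ℕ} (hx : x < v) :
    ({x} : Finset ℕ) ∈ (range v).powersetCard 1 := by
  rw [mem_powersetCard]
  exact ⟨singleton_subset_iff.mpr (mem_range.mpr hx), card_singleton x⟩

theorem stmt3 (k v : ℕ) (hk : 1 ≤ k) (hkv : k < v) (h2k : 2 * k ≤ v)
    (hdvd : k ∣ v.choose 2) :
    mu 1 k v = v - 1 ∧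
    (∃ A : Multiset (Finset ℕ), IsAdesign 1 k v A ∧
      (Finset.range v).image (fun x => freq A {x}) = Finset.range v) ∧
    (∀ A : Multiset (Finset ℕ), IsAdesign 1 k v A →
      ∃ x ∈ Finset.range v, v - 1 ≤ freq A {x}) := by
  set b := v.choose 2 / k with hbdef
  have hkb : k * b = v.choose 2 := Nat.mul_div_cancel' hdvd
  have hv2 : 2 ≤ v := by omega
  have hb1 : v - 1 ≤ b := by
    have h1 : 2 * (k * (v-1)) ≤ v * (v - 1) := by
      rw [← mul_assoc]; exact Nat.mul_le_mul_right _ h2k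
    have h2 : v.choose 2 = v * (v-1) / 2 := Nat.choose_two_right v
    have h3 : k * (v-1) ≤ k * b := by rw [hkb, h2]; omega
    exact Nat.le_of_mul_le_mul_left h3 (by omega)
  have hb0 : 0 < b := by omega
  have hvb : v ≤ b + 1 := by omega
  have hfreq : ∀ x < v, freq (Adm b v) {x} = x := fun x hx =>
    freq_Adm_eq b v x hb0 hx (by omega)
  have hAde : IsAdesign 1 k v (Adm b v) := by
    constructor
    · intro K hK
      simp only [Adm, Multiset.mem_map, Multiset.mem_range] at hK
      obtain ⟨r, hr, rfl⟩ := hK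
      exact ⟨filter_subset _ _, card_blk k b v r hb0 hr hvb hkb⟩
    · intro T₁ h₁ T₂ h₂ hf
      obtain ⟨x, hx, rfl⟩ := pcard_one h₁
      obtain ⟨y, hy, rfl⟩ := pcard_one h₂
      rw [hfreq x hx, hfreq y hy] at hf
      rw [hf]
  have lower : ∀ A : Multiset (Finset ℕ), IsAdesign 1 k v A →
      ∃ x ∈ Finset.range v, v - 1 ≤ freq A {x} := by
    intro A hA
    by_contra hc
    push_neg at hc
    have hinj : Set.InjOn (fun x => freq A {x}) (range v) := by
      intro x hx y hy h
      have := hA.2 {x} (singleton_mem_pcard (mem_range.mp hx)) {y}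
        (singleton_mem_pcard (mem_range.mp hy)) h
      simpa using this
    have hcard : ((range v).image (fun x => freq A {x})).card = v := by
      rw [card_image_of_injOn hinj, card_range]
    have hsub : (range v).image (fun x => freq A {x}) ⊆ range (v-1) := by
      intro m hm
      obtain ⟨x, hx, rfl⟩ := mem_image.mp hm
      exact mem_range.mpr (hc x hx)
    have := card_le_card hsub
    rw [hcard, card_range] at this
    omega
  have hAbd : ∀ T ∈ (Finset.range v).powersetCard 1, freq (Adm b v) T ≤ v - 1 := by
    intro T hT
    obtain ⟨x, hx, rfl⟩ := pcard_one hT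
    rw [hfreq x hx]; omega
  refine ⟨?_, ⟨Adm b v, hAde, ?_⟩, lower⟩
  · rw [mu]
    apply le_antisymm
    · exact Nat.sInf_le ⟨Adm b v, hAde, hAbd⟩
    · refine le_csInf ⟨v-1, ⟨Adm b v, hAde, hAbd⟩⟩ ?_
      rintro m ⟨A, hA, hbd⟩
      obtain ⟨x, hx, hfx⟩ := lower A hA
      have := hbd {x} (singleton_mem_pcard (mem_range.mp hx))
      omega
  · ext m
    simp only [mem_image, mem_range]
    constructor
    · rintro ⟨x, hx, rfl⟩; rw [hfreq x hx]; exact hx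
    · intro hm; exact ⟨m, hm, hfreq m hm⟩
end

section
/- Let v > k ≥ 1 with 2k ≤ v and k not dividing C(v,2). Then μ(1,k,v) = v. -/
open Finset

lemma freq_cons (K : Finset ℕ) (A : Multiset (Finset ℕ)) (T : Finset ℕ) :
    freq (K ::ₘ A) T = (if T ⊆ K then 1 else 0) + freq A T := by
  simp only [freq, Multiset.filter_cons, Multiset.card_add]
  split <;> simp

lemma sum_freq {A : Multiset (Finset ℕ)} {v k : ℕ}
    (hA : ∀ K ∈ A, K ⊆ Finset.range v ∧ K.card = k) :
    ∑ i ∈ Finset.range v, freq A {i} = k * Multiset.card A := by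
  induction A using Multiset.induction with
  | empty => simp [freq]
  | cons K A ih =>
    have hK := hA K (Multiset.mem_cons_self _ _)
    rw [Finset.sum_congr rfl (fun i _ => freq_cons K A {i})]
    rw [Finset.sum_add_distrib, ih (fun K' h => hA K' (Multiset.mem_cons_of_mem h))]
    have h1 : ∑ i ∈ Finset.range v, (if ({i} : Finset ℕ) ⊆ K then 1 else 0) = k := by
      simp only [Finset.singleton_subset_iff]
      rw [Finset.sum_ite_mem, Finset.inter_eq_right.mpr hK.1]
      simp [hK.2]
    rw [h1, Multiset.card_cons, Nat.mul_succ]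
    ring

/-- Greedy construction: any degree sequence bounded by `b` summing to `b*k`
is realizable by `b` blocks of size `k`. -/
lemma exists_blocks (k v : ℕ) (hkv : k ≤ v) :
    ∀ b (d : ℕ → ℕ), (∑ i ∈ Finset.range v, d i = b * k) → (∀ i ∈ Finset.range v, d i ≤ b) →
    ∃ A : Multiset (Finset ℕ), (∀ K ∈ A, K ⊆ Finset.range v ∧ K.card = k) ∧
      ∀ i ∈ Finset.range v, freq A {i} = d i := by
  intro b
  induction b with
  | zero =>
    intro d hsum _
    refine ⟨0, by simp, ?_⟩
    intro i hi
    have hd : d i = 0 := by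
      have := (by simpa using hsum : ∀ i < v, d i = 0) i (Finset.mem_range.mp hi)
      exact this
    simp [freq, hd]
  | succ b ih =>
    intro d hsum hle
    set M := (Finset.range v).filter (fun i => d i = b + 1) with hM
    set P := (Finset.range v).filter (fun i => 0 < d i) with hP
    have hMP : M ⊆ P := by
      intro i hi
      simp only [hM, Finset.mem_filter] at hi
      simp only [hP, Finset.mem_filter]
      exact ⟨hi.1, by omega⟩
    have hMcard : M.card ≤ k := by
      have h1 : M.card * (b + 1) = ∑ i ∈ M, d i := by
        rw [Finset.sum_congr rfl (fun i hi => (Finset.mem_filter.mp hi).2)]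
        simp [mul_comm, hM]
      have h2 : ∑ i ∈ M, d i ≤ ∑ i ∈ Finset.range v, d i :=
        Finset.sum_le_sum_of_subset (Finset.filter_subset _ _)
      rw [hsum] at h2
      have h3 : M.card * (b + 1) ≤ (b + 1) * k := by rw [h1]; exact h2
      rw [mul_comm (b + 1) k] at h3
      exact Nat.le_of_mul_le_mul_right h3 (Nat.succ_pos b)
    have hPcard : k ≤ P.card := by
      have h1 : ∑ i ∈ Finset.range v, d i = ∑ i ∈ P, d i := by
        refine (Finset.sum_subset (Finset.filter_subset _ _) ?_).symm
        intro i hi hni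
        simp only [hP, Finset.mem_filter, not_and, not_lt] at hni
        exact Nat.le_zero.mp (hni hi)
      have h2 : ∑ i ∈ P, d i ≤ P.card * (b + 1) := by
        have := Finset.sum_le_card_nsmul P d (b + 1)
          (fun i hi => hle i (Finset.mem_of_mem_filter _ hi))
        simpa [smul_eq_mul] using this
      have h3 : (b + 1) * k ≤ P.card * (b + 1) := by rw [← hsum, h1]; exact h2
      rw [mul_comm (b + 1) k] at h3
      exact Nat.le_of_mul_le_mul_right h3 (Nat.succ_pos b)
    obtain ⟨S, hMS, hSP, hScard⟩ :=
      Finset.exists_subsuperset_card_eq hMP hMcard hPcard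
    have hSrange : S ⊆ Finset.range v := hSP.trans (Finset.filter_subset _ _)
    have hSpos : ∀ i ∈ S, 0 < d i := fun i hi => (Finset.mem_filter.mp (hSP hi)).2
    set d' : ℕ → ℕ := fun i => d i - (if i ∈ S then 1 else 0) with hd'
    have hsplit : ∀ i ∈ Finset.range v, d i = d' i + (if i ∈ S then 1 else 0) := by
      intro i _
      by_cases h : i ∈ S
      · have := hSpos i h; simp [hd', h]; omega
      · simp [hd', h]
    have hsum' : ∑ i ∈ Finset.range v, d' i = b * k := by
      have e1 : ∑ i ∈ Finset.range v, d i
          = ∑ i ∈ Finset.range v, d' i + ∑ i ∈ Finset.range v, (if i ∈ S then 1 else 0) := by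
        rw [← Finset.sum_add_distrib]
        exact Finset.sum_congr rfl hsplit
      have e2 : ∑ i ∈ Finset.range v, (if i ∈ S then 1 else 0) = k := by
        rw [Finset.sum_ite_mem, Finset.inter_eq_right.mpr hSrange]
        simp [hScard]
      rw [hsum, e2] at e1
      have e3 : (b + 1) * k = b * k + k := by ring
      omega
    have hle' : ∀ i ∈ Finset.range v, d' i ≤ b := by
      intro i hi
      by_cases h : i ∈ S
      · have := hle i hi; simp [hd', h]; omega
      · have hiM : i ∉ M := fun hm => h (hMS hm)
        simp only [hM, Finset.mem_filter, not_and] at hiM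
        have := hle i hi
        have := hiM hi
        simp [hd', h]
        omega
    obtain ⟨A, hAblocks, hAfreq⟩ := ih d' hsum' hle'
    refine ⟨S ::ₘ A, ?_, ?_⟩
    · intro K hK
      rcases Multiset.mem_cons.mp hK with rfl | h
      · exact ⟨hSrange, hScard⟩
      · exact hAblocks K h
    · intro i hi
      rw [freq_cons, hAfreq i hi]
      have := hsplit i hi
      simp only [Finset.singleton_subset_iff]
      omega

theorem stmt4 (k v : ℕ) (hk : 1 ≤ k) (hkv : k < v) (h2k : 2 * k ≤ v)
    (hndvd : ¬ k ∣ v.choose 2) :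
    mu 1 k v = v := by
  -- notation for the defining set
  set Sset : Set ℕ :=
    {m | ∃ A, IsAdesign 1 k v A ∧ ∀ T ∈ (Finset.range v).powersetCard 1, freq A T ≤ m} with hSset
  -- singletons in powersetCard 1
  have hsingle : ∀ T ∈ (Finset.range v).powersetCard 1, ∃ i ∈ Finset.range v, T = {i} := by
    intro T hT
    rw [Finset.mem_powersetCard] at hT
    obtain ⟨i, rfl⟩ := Finset.card_eq_one.mp hT.2
    exact ⟨i, hT.1 (Finset.mem_singleton_self i), rfl⟩
  -- Lower bound: every member of the set is ≥ v
  have hlower : ∀ m ∈ Sset, v ≤ m := by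
    rintro m ⟨A, ⟨hAblocks, hAdist⟩, hAle⟩
    by_contra hmv
    push_neg at hmv
    -- the map i ↦ freq A {i} is injective on range v with values < v
    set f : ℕ → ℕ := fun i => freq A {i} with hf
    have hinj : ∀ i ∈ Finset.range v, ∀ j ∈ Finset.range v, f i = f j → i = j := by
      intro i hi j hj hij
      have h1 : ({i} : Finset ℕ) ∈ (Finset.range v).powersetCard 1 := by
        rw [Finset.mem_powersetCard]; simp [Finset.singleton_subset_iff, hi]
      have h2 : ({j} : Finset ℕ) ∈ (Finset.range v).powersetCard 1 := by
        rw [Finset.mem_powersetCard]; simp [Finset.singleton_subset_iff, hj]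
      have := hAdist {i} h1 {j} h2 hij
      exact Finset.singleton_injective this
    have hlt : ∀ i ∈ Finset.range v, f i < v := by
      intro i hi
      have h1 : ({i} : Finset ℕ) ∈ (Finset.range v).powersetCard 1 := by
        rw [Finset.mem_powersetCard]; simp [Finset.singleton_subset_iff, hi]
      exact lt_of_le_of_lt (hAle {i} h1) hmv
    have himg : (Finset.range v).image f = Finset.range v := by
      apply Finset.eq_of_subset_of_card_le
      · intro j hj
        obtain ⟨i, hi, rfl⟩ := Finset.mem_image.mp hj
        exact Finset.mem_range.mpr (hlt i hi)
      · rw [Finset.card_image_of_injOn hinj]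
    have hsumeq : ∑ i ∈ Finset.range v, f i = v.choose 2 := by
      have := Finset.sum_image (f := id) (s := Finset.range v) (g := f) hinj
      rw [himg] at this
      simp only [id] at this
      rw [← this, Nat.choose_two_right, Finset.sum_range_id]
    have hsum2 : ∑ i ∈ Finset.range v, f i = k * Multiset.card A := sum_freq hAblocks
    exact hndvd ⟨Multiset.card A, by omega⟩
  -- Upper bound: construct an adesign with all frequencies ≤ v
  have hvmem : v ∈ Sset := by
    set c := v.choose 2 with hc
    have hmod : 0 < c % k := by
      rcases Nat.eq_zero_or_pos (c % k) with h | h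
      · exact absurd (Nat.dvd_of_mod_eq_zero h) hndvd
      · exact h
    have hmodlt : c % k < k := Nat.mod_lt _ (by omega)
    set t := k - c % k with ht
    have htpos : 0 < t := by omega
    have htk : t < k := by omega
    set s := v - t with hs
    have hsv : 0 < s ∧ s < v := by constructor <;> omega
    set d : ℕ → ℕ := fun i => if i < s then i else i + 1 with hd
    -- v ≥ 2k+1 since v = 2k would make k ∣ C(v,2)
    have hv2k1 : 2 * k + 1 ≤ v := by
      rcases Nat.lt_or_ge (2 * k) v with h | h
      · omega
      · exfalso
        have hv : v = 2 * k := by omega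
        apply hndvd
        rw [hc, hv, Nat.choose_two_right]
        refine ⟨2 * k - 1, ?_⟩
        have : 2 * k * (2 * k - 1) = 2 * (k * (2 * k - 1)) := by ring
        rw [this, Nat.mul_div_cancel_left _ (by norm_num)]
    -- sum of d
    have hcard_tail : ((Finset.range v).filter (fun i => ¬ i < s)).card = v - s := by
      have : (Finset.range v).filter (fun i => ¬ i < s) = Finset.Ico s v := by
        ext i
        simp [Finset.mem_filter, Finset.mem_range, Finset.mem_Ico, not_lt]
        omega
      rw [this, Nat.card_Ico]
    have hsumd : ∑ i ∈ Finset.range v, d i = c + t := by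
      have e1 : ∀ i, d i = i + (if i < s then 0 else 1) := by
        intro i; simp only [hd]; split <;> simp
      calc ∑ i ∈ Finset.range v, d i
          = ∑ i ∈ Finset.range v, (i + (if i < s then 0 else 1)) := by
            exact Finset.sum_congr rfl (fun i _ => e1 i)
        _ = (∑ i ∈ Finset.range v, i) + ∑ i ∈ Finset.range v, (if i < s then 0 else 1) :=
            Finset.sum_add_distrib
        _ = c + (v - s) := by
            rw [Finset.sum_range_id, ← Nat.choose_two_right, ← hc]
            congr 1
            have e2 : ∑ i ∈ Finset.range v, (if i < s then 0 else 1)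
                = ((Finset.range v).filter (fun i => ¬ i < s)).card := by
              rw [Finset.sum_ite]
              simp
            rw [e2, hcard_tail]
        _ = c + t := by omega
    -- the number of blocks
    set b := c / k + 1 with hb
    have hdm := Nat.div_add_mod c k
    have hbk : ∑ i ∈ Finset.range v, d i = b * k := by
      have e : b * k = k * (c / k) + k := by rw [hb]; ring
      rw [hsumd]
      omega
    -- v ≤ b
    have hvk : v * k ≤ c := by
      rw [hc, Nat.choose_two_right]
      rw [Nat.le_div_iff_mul_le (by norm_num)]
      have : v * k * 2 = v * (2 * k) := by ring
      rw [this]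
      exact Nat.mul_le_mul_left v (by omega)
    have hvb : v ≤ b := by
      have h1 : v * k < b * k := by omega
      exact le_of_lt (Nat.lt_of_mul_lt_mul_right h1)
    have hdlev : ∀ i ∈ Finset.range v, d i ≤ v := by
      intro i hi
      rw [Finset.mem_range] at hi
      simp only [hd]
      split <;> omega
    have hdleb : ∀ i ∈ Finset.range v, d i ≤ b := fun i hi => (hdlev i hi).trans hvb
    obtain ⟨A, hAblocks, hAfreq⟩ := exists_blocks k v (le_of_lt hkv) b d hbk hdleb
    have hdinj : ∀ i < v, ∀ j < v, d i = d j → i = j := by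
      intro i _ j _ h
      simp only [hd] at h
      split_ifs at h <;> omega
    refine ⟨A, ⟨hAblocks, ?_⟩, ?_⟩
    · intro T₁ hT₁ T₂ hT₂ hEq
      obtain ⟨i, hi, rfl⟩ := hsingle T₁ hT₁
      obtain ⟨j, hj, rfl⟩ := hsingle T₂ hT₂
      rw [hAfreq i hi, hAfreq j hj] at hEq
      rw [Finset.mem_range] at hi hj
      exact congrArg singleton (hdinj i hi j hj hEq)
    · intro T hT
      obtain ⟨i, hi, rfl⟩ := hsingle T hT
      rw [hAfreq i hi]
      exact hdlev i hi
  -- conclude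
  have hmu : mu 1 k v = sInf Sset := by unfold mu; rw [← hSset]
  rw [hmu]
  exact le_antisymm (Nat.sInf_le hvmem) (hlower _ (Nat.sInf_mem ⟨v, hvmem⟩))
end

section
/- Let f(1) < f(2) < ... < f(v) be nonnegative integers whose sum F is divisible by k, and suppose f(v) ≤ F/k. Then there exists a multiset of b = F/k blocks, each of size exactly k, on the point set {1,...,v}, such that point x has frequency exactly f(x) for each x. -/
open Finset

namespace Stmt7Aux

/-- Partial sum of frequencies: positions `[S f (x-1), S f x)` belong to point `x`. -/
def S (f : ℕ → ℕ) (x : ℕ) : ℕ := ∑ y ∈ Finset.Icc 1 x, f y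

lemma S_succ (f : ℕ → ℕ) (x : ℕ) : S f (x + 1) = S f x + f (x + 1) := by
  unfold S
  rw [← Finset.sum_Icc_succ_top (by omega)]

lemma S_mono (f : ℕ → ℕ) {a b : ℕ} (h : a ≤ b) : S f a ≤ S f b :=
  Finset.sum_le_sum_of_subset (Finset.Icc_subset_Icc_right h)

/-- The i-th block. -/
def blk (f : ℕ → ℕ) (v b i : ℕ) : Finset ℕ :=
  @Finset.filter ℕ (fun x => ∃ p ∈ Finset.Ico (S f (x - 1)) (S f x), p % b = i)
    (fun _ => Finset.decidableExistsAndFinset) (Finset.Icc 1 v)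

lemma inj_mod {b a l : ℕ} (hl : l ≤ b) {p q : ℕ}
    (hp : p ∈ Finset.Ico a (a + l)) (hq : q ∈ Finset.Ico a (a + l))
    (h : p % b = q % b) : p = q := by
  simp only [Finset.mem_Ico] at hp hq
  rcases le_total p q with hpq | hpq
  · have hd : b ∣ q - p := (Nat.modEq_iff_dvd' hpq).mp h
    rcases Nat.eq_zero_or_pos (q - p) with h0 | h0
    · omega
    · have := Nat.le_of_dvd h0 hd; omega
  · have hd : b ∣ p - q := (Nat.modEq_iff_dvd' hpq).mp h.symm
    rcases Nat.eq_zero_or_pos (p - q) with h0 | h0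
    · omega
    · have := Nat.le_of_dvd h0 hd; omega

lemma sum_card_filter (f : ℕ → ℕ) (P : ℕ → Prop) [DecidablePred P] (n : ℕ) :
    ∑ x ∈ Finset.Icc 1 n, ((Finset.Ico (S f (x - 1)) (S f x)).filter P).card
      = ((Finset.Ico 0 (S f n)).filter P).card := by
  induction n with
  | zero => simp [S]
  | succ n ih =>
    rw [Finset.sum_Icc_succ_top (by omega), ih]
    simp only [Nat.add_sub_cancel]
    rw [← Finset.card_union_of_disjoint
        (Finset.disjoint_filter_filter (Finset.Ico_disjoint_Ico_consecutive 0 (S f n) (S f (n+1)))),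
      ← Finset.filter_union,
      Finset.Ico_union_Ico_eq_Ico (Nat.zero_le _) (S_mono f (by omega))]

lemma card_residues (b k i : ℕ) (hi : i < b) :
    ((Finset.Ico 0 (b * k)).filter (fun p => p % b = i)).card = k := by
  have hb : 0 < b := by omega
  have himg : (Finset.Ico 0 (b * k)).filter (fun p => p % b = i)
      = (Finset.range k).image (fun j => j * b + i) := by
    ext p
    simp only [Finset.mem_filter, Finset.mem_Ico, Finset.mem_image, Finset.mem_range]
    constructor
    · rintro ⟨⟨-, hp⟩, rfl⟩
      refine ⟨p / b, ?_, ?_⟩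
      · by_contra hc
        push_neg at hc
        have := Nat.mul_le_mul_left b hc
        have := Nat.div_mul_le_self p b
        nlinarith [Nat.lt_succ_of_le (Nat.le_refl p), Nat.div_add_mod p b]
      · rw [Nat.mul_comm]
        exact Nat.div_add_mod p b
    · rintro ⟨j, hj, rfl⟩
      constructor
      · constructor
        · omega
        · calc j * b + i < j * b + b := by omega
            _ = (j + 1) * b := by ring
            _ ≤ k * b := Nat.mul_le_mul_right b (by omega)
            _ = b * k := Nat.mul_comm _ _
      · rw [Nat.add_comm, Nat.add_mul_mod_self_right, Nat.mod_eq_of_lt hi]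
  rw [himg, Finset.card_image_of_injective _ (fun a c h => by
      have h2 : a * b = c * b := by omega
      have := Nat.eq_of_mul_eq_mul_right hb h2
      omega), Finset.card_range]

end Stmt7Aux

theorem stmt7 (v k : ℕ) (hv : 1 ≤ v) (hk : 1 ≤ k) (f : ℕ → ℕ)
    (hmono : ∀ x, 1 ≤ x → x < v → f x < f (x + 1))
    (hdvd : k ∣ ∑ x ∈ Finset.Icc 1 v, f x)
    (hfv : f v ≤ (∑ x ∈ Finset.Icc 1 v, f x) / k) :
    ∃ A : Multiset (Finset ℕ),
      Multiset.card A = (∑ x ∈ Finset.Icc 1 v, f x) / k ∧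
      (∀ K ∈ A, K ⊆ Finset.Icc 1 v ∧ K.card = k) ∧
      ∀ x ∈ Finset.Icc 1 v, freq A {x} = f x := by
  classical
  open Stmt7Aux in
  set F := ∑ x ∈ Finset.Icc 1 v, f x with hFdef
  set b := F / k with hbdef
  have hbk : b * k = F := Nat.div_mul_cancel hdvd
  have hmono' : ∀ y, y ≤ v → ∀ x, 1 ≤ x → x ≤ y → f x ≤ f y := by
    intro y
    induction y with
    | zero => intro _ x hx hxy; omega
    | succ n ih =>
      intro hyv x hx hxy
      rcases Nat.lt_or_ge x (n + 1) with h | h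
      · have h1 : f x ≤ f n := ih (by omega) x hx (by omega)
        have h2 := hmono n (by omega) (by omega)
        omega
      · have hxn : x = n + 1 := by omega
        rw [hxn]
  have hfb : ∀ x, 1 ≤ x → x ≤ v → f x ≤ b := fun x hx hxv =>
    le_trans (hmono' v le_rfl x hx hxv) hfv
  have hSv : Stmt7Aux.S f v = b * k := by rw [hbk]; rfl
  -- the interval structure for x ≥ 1
  have hSx : ∀ x, 1 ≤ x → Stmt7Aux.S f x = Stmt7Aux.S f (x - 1) + f x := by
    intro x hx
    obtain ⟨y, rfl⟩ := Nat.exists_eq_add_of_le hx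
    have := Stmt7Aux.S_succ f y
    simpa [Nat.add_comm 1 y] using this
  set A : Multiset (Finset ℕ) := (Multiset.range b).map (Stmt7Aux.blk f v b) with hAdef
  refine ⟨A, ?_, ?_, ?_⟩
  · simp [hAdef]
  · intro K hK
    rw [hAdef, Multiset.mem_map] at hK
    obtain ⟨i, hi, rfl⟩ := hK
    rw [Multiset.mem_range] at hi
    constructor
    · exact Finset.filter_subset _ _
    · -- card of the i-th block is k
      rw [Stmt7Aux.blk, Finset.card_filter]
      have hterm : ∀ x ∈ Finset.Icc 1 v,
          (@ite ℕ (∃ p ∈ Finset.Ico (Stmt7Aux.S f (x - 1)) (Stmt7Aux.S f x), p % b = i)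
              Finset.decidableExistsAndFinset 1 0)
            = ((Finset.Ico (Stmt7Aux.S f (x - 1)) (Stmt7Aux.S f x)).filter
                (fun p => p % b = i)).card := by
        intro x hx
        rw [Finset.mem_Icc] at hx
        have hle1 : ((Finset.Ico (Stmt7Aux.S f (x - 1)) (Stmt7Aux.S f x)).filter
            (fun p => p % b = i)).card ≤ 1 := by
          rw [Finset.card_le_one]
          intro p hp q hq
          rw [Finset.mem_filter] at hp hq
          refine Stmt7Aux.inj_mod (a := Stmt7Aux.S f (x - 1)) (hfb x hx.1 hx.2) ?_ ?_ (hp.2.trans hq.2.symm)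
          · rw [← hSx x hx.1]; exact hp.1
          · rw [← hSx x hx.1]; exact hq.1
        by_cases hex : ∃ p ∈ Finset.Ico (Stmt7Aux.S f (x - 1)) (Stmt7Aux.S f x), p % b = i
        · obtain ⟨p, hp1, hp2⟩ := hex
          have hne : ((Finset.Ico (Stmt7Aux.S f (x - 1)) (Stmt7Aux.S f x)).filter
              (fun p => p % b = i)).Nonempty := ⟨p, Finset.mem_filter.mpr ⟨hp1, hp2⟩⟩
          have := Finset.card_pos.mpr hne
          simp only [if_pos (⟨p, hp1, hp2⟩ : ∃ p ∈ _, p % b = i)]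
          omega
        · rw [if_neg hex]
          rw [eq_comm, Finset.card_eq_zero, Finset.filter_eq_empty_iff]
          intro p hp hc
          exact hex ⟨p, hp, hc⟩
      refine (Finset.sum_congr rfl hterm).trans ?_
      rw [Stmt7Aux.sum_card_filter, hSv, Stmt7Aux.card_residues b k i hi]
  · intro x hx
    rw [Finset.mem_Icc] at hx
    have hfreq : freq A {x}
        = Multiset.card (Multiset.filter (fun i => x ∈ Stmt7Aux.blk f v b i)
            (Multiset.range b)) := by
      rw [freq, hAdef, Multiset.filter_map, Multiset.card_map]
      congr 1
      apply Multiset.filter_congr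
      intro i _
      simp [Finset.singleton_subset_iff]
    have hfin : Multiset.card (Multiset.filter (fun i => x ∈ Stmt7Aux.blk f v b i)
          (Multiset.range b))
        = ((Finset.range b).filter (fun i => x ∈ Stmt7Aux.blk f v b i)).card := rfl
    rw [hfreq, hfin]
    have himg : (Finset.range b).filter (fun i => x ∈ Stmt7Aux.blk f v b i)
        = (Finset.Ico (Stmt7Aux.S f (x - 1)) (Stmt7Aux.S f x)).image (· % b) := by
      ext i
      simp only [Finset.mem_filter, Finset.mem_range, Stmt7Aux.blk, Finset.mem_image,
        Finset.mem_Icc]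
      constructor
      · rintro ⟨-, -, p, hp, hpi⟩
        exact ⟨p, hp, hpi⟩
      · rintro ⟨p, hp, rfl⟩
        have hb0 : 0 < b := by
          rw [Finset.mem_Ico, hSx x hx.1] at hp
          have : 0 < f x := by omega
          have := hfb x hx.1 hx.2
          omega
        exact ⟨Nat.mod_lt p hb0, ⟨hx.1, hx.2⟩, p, hp, rfl⟩
    rw [himg, Finset.card_image_of_injOn, Nat.card_Ico, hSx x hx.1]
    · omega
    · intro p hp q hq hpq
      simp only [Finset.coe_Ico, Set.mem_Ico] at hp hq
      refine Stmt7Aux.inj_mod (a := Stmt7Aux.S f (x - 1)) (hfb x hx.1 hx.2) ?_ ?_ hpq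
      · rw [Finset.mem_Ico, ← hSx x hx.1]; omega
      · rw [Finset.mem_Ico, ← hSx x hx.1]; omega
end

section
/- Let V ⊆ ℤ be a Sidon set of order t (B_t-set) of size v, and let t ≤ k < v. Assign to each k-subset K of V the multiplicity f(K) = Σ_{m ∈ V∖K} m. Then for every t-subset T of V, the resulting frequency of T equals C(v−t−1, k−t) · Σ_{m ∈ V∖T} m, and all these frequencies over distinct t-subsets T are pairwise distinct. -/
open Finset

/-- A Sidon set of order `t` (`B_t`-set): all `t`-subset sums are distinct. -/
def IsSidon (t : ℕ) (V : Finset ℕ) : Prop :=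
  ∀ S ∈ V.powersetCard t, ∀ S' ∈ V.powersetCard t, (∑ m ∈ S, m) = (∑ m ∈ S', m) → S = S'

/-- The family of all `k`-subsets `K` of `V`, each with multiplicity `∑_{m ∈ V∖K} m`. -/
def cofamily (V : Finset ℕ) (k : ℕ) : Multiset (Finset ℕ) :=
  (V.powersetCard k).val.bind (fun K => Multiset.replicate (∑ m ∈ V \ K, m) K)

lemma card_filter_replicate {β : Type*} (n : ℕ) (b : β) (p : β → Prop) [DecidablePred p] :
    Multiset.card ((Multiset.replicate n b).filter p) = if p b then n else 0 := by
  induction n with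
  | zero => simp
  | succ n ih =>
    rw [Multiset.replicate_succ, Multiset.filter_cons]
    split <;> simp_all

lemma card_filter_bind {α β : Type*} (s : Multiset α) (f : α → Multiset β) (p : β → Prop)
    [DecidablePred p] :
    Multiset.card ((s.bind f).filter p)
      = (s.map (fun a => Multiset.card ((f a).filter p))).sum := by
  induction s using Multiset.induction with
  | empty => simp
  | cons a s ih => simp [Multiset.filter_add, ih]

lemma count_aux (V T : Finset ℕ) (m t k : ℕ) (hT : T ⊆ V) (hTc : T.card = t)
    (hm : m ∈ V \ T) (htk : t ≤ k) :
    ((V.powersetCard k).filter (fun K => T ⊆ K ∧ m ∉ K)).card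
      = (V.card - t - 1).choose (k - t) := by
  have key : ((V.powersetCard k).filter (fun K => T ⊆ K ∧ m ∉ K)).card
      = (((V \ T).erase m).powersetCard (k - t)).card := by
    apply Finset.card_bij' (fun K _ => K \ T) (fun S _ => S ∪ T)
    · intro K hK
      simp only [mem_filter, mem_powersetCard] at hK
      obtain ⟨⟨hKV, hKc⟩, hTK, hmK⟩ := hK
      simp only [mem_powersetCard]
      constructor
      · intro x hx
        simp only [mem_sdiff] at hx
        rw [Finset.mem_erase, Finset.mem_sdiff]
        exact ⟨fun h => hmK (h ▸ hx.1), hKV hx.1, hx.2⟩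
      · rw [Finset.card_sdiff_of_subset hTK, hKc, hTc]
    · intro S hS
      simp only [mem_powersetCard] at hS
      obtain ⟨hSsub, hSc⟩ := hS
      have hSVT : S ⊆ V \ T := hSsub.trans (Finset.erase_subset _ _)
      have hdisj : Disjoint S T := Finset.disjoint_left.2 fun x hx =>
        (Finset.mem_sdiff.1 (hSVT hx)).2
      simp only [mem_filter, mem_powersetCard]
      refine ⟨⟨Finset.union_subset (hSVT.trans (Finset.sdiff_subset)) hT, ?_⟩,
        Finset.subset_union_right, ?_⟩
      · rw [Finset.card_union_of_disjoint hdisj, hSc, hTc, Nat.sub_add_cancel htk]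
      · intro hmem
        rcases Finset.mem_union.1 hmem with h | h
        · exact (Finset.mem_erase.1 (hSsub h)).1 rfl
        · exact (Finset.mem_sdiff.1 hm).2 h
    · intro K hK
      simp only [mem_filter, mem_powersetCard] at hK
      exact Finset.sdiff_union_of_subset hK.2.1
    · intro S hS
      simp only [mem_powersetCard] at hS
      have hSVT : S ⊆ V \ T := hS.1.trans (Finset.erase_subset _ _)
      rw [Finset.union_sdiff_right]
      exact Finset.sdiff_eq_self_of_disjoint (Finset.disjoint_left.2 fun x hx =>
        (Finset.mem_sdiff.1 (hSVT hx)).2)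
  rw [key, Finset.card_powersetCard]
  congr 1
  rw [Finset.card_erase_of_mem hm, Finset.card_sdiff_of_subset hT, hTc]

lemma freq_cofamily (V T : Finset ℕ) (k : ℕ) :
    freq (cofamily V k) T
      = ∑ K ∈ (V.powersetCard k).filter (fun K => T ⊆ K), ∑ m ∈ V \ K, m := by
  rw [freq, cofamily, card_filter_bind, Finset.sum_filter, Finset.sum]
  congr 1
  apply Multiset.map_congr rfl
  intro K _
  rw [card_filter_replicate]

lemma freq_cofamily_eq (t k v : ℕ) (V : Finset ℕ) (hV : V.card = v) (htk : t ≤ k)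
    (T : Finset ℕ) (hT : T ∈ V.powersetCard t) :
    freq (cofamily V k) T = (v - t - 1).choose (k - t) * ∑ m ∈ V \ T, m := by
  rw [Finset.mem_powersetCard] at hT
  obtain ⟨hTV, hTc⟩ := hT
  rw [freq_cofamily]
  have step1 : ∀ K ∈ (V.powersetCard k).filter (fun K => T ⊆ K),
      (∑ m ∈ V \ K, m) = ∑ m ∈ V \ T, if m ∉ K then m else 0 := by
    intro K hK
    rw [Finset.mem_filter] at hK
    rw [Finset.sum_ite, Finset.sum_const, smul_zero, add_zero]
    congr 1
    ext x
    simp only [Finset.mem_filter, Finset.mem_sdiff]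
    have h2 : x ∉ K → x ∉ T := fun hk ht => hk (hK.2 ht)
    tauto
  rw [Finset.sum_congr rfl step1, Finset.sum_comm]
  have step2 : ∀ m ∈ V \ T,
      (∑ K ∈ (V.powersetCard k).filter (fun K => T ⊆ K), if m ∉ K then m else 0)
        = (v - t - 1).choose (k - t) * m := by
    intro m hm
    rw [Finset.sum_ite, Finset.sum_const, Finset.sum_const, smul_zero, add_zero,
      smul_eq_mul]
    have h := count_aux V T m t k hTV hTc hm htk
    rw [hV] at h
    rw [Finset.filter_filter]
    congr 1
  rw [Finset.sum_congr rfl step2, ← Finset.mul_sum]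

theorem stmt8 (t k v : ℕ) (V : Finset ℕ) (hV : V.card = v)
    (hsidon : IsSidon t V) (ht : 1 ≤ t) (htk : t ≤ k) (hkv : k < v) :
    (∀ T ∈ V.powersetCard t,
      freq (cofamily V k) T = (v - t - 1).choose (k - t) * ∑ m ∈ V \ T, m) ∧
    ∀ T₁ ∈ V.powersetCard t, ∀ T₂ ∈ V.powersetCard t,
      freq (cofamily V k) T₁ = freq (cofamily V k) T₂ → T₁ = T₂ := by
  refine ⟨fun T hT => freq_cofamily_eq t k v V hV htk T hT, ?_⟩
  intro T₁ hT₁ T₂ hT₂ hfeq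
  rw [freq_cofamily_eq t k v V hV htk T₁ hT₁,
    freq_cofamily_eq t k v V hV htk T₂ hT₂] at hfeq
  have hpos : 0 < (v - t - 1).choose (k - t) := by
    apply Nat.choose_pos
    omega
  have hsum : (∑ m ∈ V \ T₁, m) = ∑ m ∈ V \ T₂, m :=
    Nat.eq_of_mul_eq_mul_left hpos hfeq
  have h1 := Finset.sum_sdiff (f := id) (Finset.mem_powersetCard.1 hT₁).1
  have h2 := Finset.sum_sdiff (f := id) (Finset.mem_powersetCard.1 hT₂).1
  simp only [id] at h1 h2
  apply hsidon T₁ hT₁ T₂ hT₂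
  omega
end

section
/- If for each x in a v-element set V there is a multiplicity f(x), and the multiset consists of the co-singletons V∖{x} with multiplicity f(x), then the frequency of a t-subset T equals Σ_{x ∉ T} f(x). If the f(x) form a Sidon set of order t, these frequencies are pairwise distinct over t-subsets, yielding a t-adesign A(t, v−1, v). -/
open Finset

/-- The multiset consisting of each co-singleton `V ∖ {x}` with multiplicity `f x`. -/
def cosingle (V : Finset ℕ) (f : ℕ → ℕ) : Multiset (Finset ℕ) :=
  V.val.bind (fun x => Multiset.replicate (f x) (V.erase x))

lemma freq_cosingle (V : Finset ℕ) (f : ℕ → ℕ) (T : Finset ℕ) (hT : T ⊆ V) :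
    freq (cosingle V f) T = ∑ x ∈ V \ T, f x := by
  classical
  have key : ∀ s : Multiset ℕ, Multiset.card (Multiset.filter (fun K => T ⊆ K)
      (s.bind (fun x => Multiset.replicate (f x) (V.erase x)))) =
      (s.map (fun x => Multiset.card (Multiset.filter (fun K => T ⊆ K)
        (Multiset.replicate (f x) (V.erase x))))).sum := by
    intro s
    induction s using Multiset.induction_on with
    | empty => simp
    | cons a s ih => simp [Multiset.cons_bind, Multiset.filter_add, ih]
  rw [freq, cosingle, key]
  have : ∀ x ∈ V.val, Multiset.card (Multiset.filter (fun K => T ⊆ K)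
      (Multiset.replicate (f x) (V.erase x))) = if x ∈ V \ T then f x else 0 := by
    intro x hx
    by_cases h : T ⊆ V.erase x
    · rw [Multiset.filter_eq_self.mpr (fun b hb => (Multiset.eq_of_mem_replicate hb) ▸ h),
        Multiset.card_replicate, if_pos]
      simp only [mem_sdiff]
      exact ⟨hx, (Finset.subset_erase.mp h).2⟩
    · rw [Multiset.filter_eq_nil.mpr (fun b hb => (Multiset.eq_of_mem_replicate hb) ▸ h),
        Multiset.card_zero, if_neg]
      simp only [mem_sdiff, not_and, not_not]
      intro _
      by_contra hxT
      exact h (Finset.subset_erase.mpr ⟨hT, hxT⟩)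
  rw [Multiset.map_congr rfl this]
  have : (Multiset.map (fun x => if x ∈ V \ T then f x else 0) V.val).sum =
      ∑ x ∈ V, if x ∈ V \ T then f x else 0 := rfl
  rw [this, Finset.sum_ite_mem, Finset.inter_eq_right.mpr Finset.sdiff_subset]

theorem stmt10 (t v : ℕ) (V : Finset ℕ) (hV : V.card = v) (f : ℕ → ℕ)
    (ht : 1 ≤ t) (htv : t < v) :
    (∀ T ∈ V.powersetCard t, freq (cosingle V f) T = ∑ x ∈ V \ T, f x) ∧
    ((∀ x ∈ V, 0 < f x) →
      (∀ S ∈ V.powersetCard t, ∀ S' ∈ V.powersetCard t,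
        (∑ x ∈ S, f x) = (∑ x ∈ S', f x) → S = S') →
      (∀ K ∈ cosingle V f, K ⊆ V ∧ K.card = v - 1) ∧
      ∀ T₁ ∈ V.powersetCard t, ∀ T₂ ∈ V.powersetCard t,
        freq (cosingle V f) T₁ = freq (cosingle V f) T₂ → T₁ = T₂) := by
  constructor
  · intro T hT
    exact freq_cosingle V f T (Finset.mem_powersetCard.mp hT).1
  · intro _ hSidon
    constructor
    · intro K hK
      rw [cosingle, Multiset.mem_bind] at hK
      obtain ⟨x, hx, hKx⟩ := hK
      have := Multiset.eq_of_mem_replicate hKx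
      subst this
      exact ⟨Finset.erase_subset _ _, by rw [Finset.card_erase_of_mem hx, hV]⟩
    · intro T₁ hT₁ T₂ hT₂ hfreq
      obtain ⟨hsub₁, _⟩ := Finset.mem_powersetCard.mp hT₁
      obtain ⟨hsub₂, _⟩ := Finset.mem_powersetCard.mp hT₂
      rw [freq_cosingle V f T₁ hsub₁, freq_cosingle V f T₂ hsub₂] at hfreq
      apply hSidon T₁ hT₁ T₂ hT₂
      have h1 := Finset.sum_sdiff (f := f) hsub₁
      have h2 := Finset.sum_sdiff (f := f) hsub₂
      omega
end

section
/- For each fixed k ≥ 3, there exists a constant C = C(k) such that for all sufficiently large v, μ(2,k,v) ≤ C v², assuming (i) a PBD(v, {k+1,k+2,k+3}) exists for all sufficiently large v and (ii) finite values m = max{μ(2,k,k+j) : j=1,2,3} and l = max{λ_min(k+j,k) : j=1,2,3} exist. -/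
open Finset

/-- A pairwise balanced design on point set `{0,...,v-1}`: every pair of distinct
points lies in exactly one block. -/
def IsPBD (v : ℕ) (B : Multiset (Finset ℕ)) : Prop :=
  (∀ K ∈ B, K ⊆ Finset.range v) ∧
  ∀ T ∈ (Finset.range v).powersetCard 2, freq B T = 1

/-- An `S_l(2,k,u)`: a multiset of `k`-subsets of `{0,...,u-1}` in which every
pair of points has frequency exactly `l`. -/
def IsDesign (l k u : ℕ) (D : Multiset (Finset ℕ)) : Prop :=
  (∀ K ∈ D, K ⊆ Finset.range u ∧ K.card = k) ∧
  ∀ T ∈ (Finset.range u).powersetCard 2, freq D T = l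

lemma freq_add (A B : Multiset (Finset ℕ)) (T : Finset ℕ) :
    freq (A + B) T = freq A T + freq B T := by
  simp [freq, Multiset.filter_add]

lemma freq_nsmul (n : ℕ) (A : Multiset (Finset ℕ)) (T : Finset ℕ) :
    freq (n • A) T = n * freq A T := by
  induction n with
  | zero => simp [freq]
  | succ n ih => rw [succ_nsmul, freq_add, ih]; ring

lemma freq_sum {ι : Type*} (s : Finset ι) (g : ι → Multiset (Finset ℕ)) (T : Finset ℕ) :
    freq (∑ i ∈ s, g i) T = ∑ i ∈ s, freq (g i) T := by
  classical
  induction s using Finset.induction with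
  | empty => simp [freq]
  | insert a s h ih => simp [Finset.sum_insert h, freq_add, ih]

lemma freq_le_card (A : Multiset (Finset ℕ)) (T : Finset ℕ) :
    freq A T ≤ Multiset.card A :=
  Multiset.card_le_card (Multiset.filter_le _ _)

lemma freq_eq_zero (A : Multiset (Finset ℕ)) (T : Finset ℕ)
    (h : ∀ K ∈ A, ¬ T ⊆ K) : freq A T = 0 := by
  rw [freq, Multiset.card_eq_zero, Multiset.filter_eq_nil]
  exact h

lemma freq_map_image (f : ℕ → ℕ) (hf : Function.Injective f)
    (A : Multiset (Finset ℕ)) (T : Finset ℕ) :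
    freq (A.map (Finset.image f)) (T.image f) = freq A T := by
  rw [freq, Multiset.filter_map, Multiset.card_map, freq]
  congr 1
  apply Multiset.filter_congr
  intro K _
  simp only [Function.comp_apply]
  exact Finset.image_subset_image_iff hf

lemma card_msum {ι : Type*} (s : Finset ι) (g : ι → Multiset (Finset ℕ)) :
    Multiset.card (∑ i ∈ s, g i) = ∑ i ∈ s, Multiset.card (g i) := by
  classical
  induction s using Finset.induction with
  | empty => simp
  | insert a s h ih => simp [Finset.sum_insert h, ih]

theorem stmt16 (k : ℕ) (hk : 3 ≤ k)
    (hPBD : ∃ v₀ : ℕ, ∀ v ≥ v₀, ∃ B : Multiset (Finset ℕ), IsPBD v B ∧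
      ∀ K ∈ B, K.card = k + 1 ∨ K.card = k + 2 ∨ K.card = k + 3)
    (hdes : ∀ j ∈ Finset.Icc 1 3, ∃ l, 0 < l ∧ ∃ D, IsDesign l k (k + j) D)
    (hade : ∀ j ∈ Finset.Icc 1 3, ∃ A, IsAdesign 2 k (k + j) A) :
    ∃ C v₁ : ℕ, ∀ v ≥ v₁, mu 2 k v ≤ C * v ^ 2 := by
  classical
  obtain ⟨v₀, hv₀⟩ := hPBD
  obtain ⟨l1, hl1, D1, hD1⟩ := hdes 1 (by decide)
  obtain ⟨l2, hl2, D2, hD2⟩ := hdes 2 (by decide)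
  obtain ⟨l3, hl3, D3, hD3⟩ := hdes 3 (by decide)
  obtain ⟨A1, hA1⟩ := hade 1 (by decide)
  obtain ⟨A2, hA2⟩ := hade 2 (by decide)
  obtain ⟨A3, hA3⟩ := hade 3 (by decide)
  set L := l1 * l2 * l3 with hLdef
  have hLpos : 0 < L := Nat.mul_pos (Nat.mul_pos hl1 hl2) hl3
  set m := max (Multiset.card A1) (max (Multiset.card A2) (Multiset.card A3)) with hmdef
  set Af : ℕ → Multiset (Finset ℕ) :=
    fun u => if u = k+1 then A1 else if u = k+2 then A2 else A3 with hAfdef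
  set Df : ℕ → Multiset (Finset ℕ) :=
    fun u => if u = k+1 then (L / l1) • D1 else if u = k+2 then (L / l2) • D2
      else (L / l3) • D3 with hDfdef
  have hAf : ∀ u, (u = k+1 ∨ u = k+2 ∨ u = k+3) →
      IsAdesign 2 k u (Af u) ∧ Multiset.card (Af u) ≤ m := by
    intro u hu
    rcases hu with h | h | h <;> subst h <;>
      simp only [hAfdef, if_pos rfl, if_neg (by omega : ¬ k+2 = k+1),
        if_neg (by omega : ¬ k+3 = k+1), if_neg (by omega : ¬ k+3 = k+2)]
    · exact ⟨hA1, le_max_left _ _⟩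
    · exact ⟨hA2, le_trans (le_max_left _ _) (le_max_right _ _)⟩
    · exact ⟨hA3, le_trans (le_max_right _ _) (le_max_right _ _)⟩
  have hDf : ∀ u, (u = k+1 ∨ u = k+2 ∨ u = k+3) → IsDesign L k u (Df u) := by
    have scale : ∀ (l u : ℕ) (D : Multiset (Finset ℕ)), 0 < l → l ∣ L →
        IsDesign l k u D → IsDesign L k u ((L / l) • D) := by
      intro l u D hl hdvd hD
      constructor
      · intro K hK
        exact hD.1 K (Multiset.mem_nsmul.1 hK).2
      · intro T hT
        rw [freq_nsmul, hD.2 T hT, Nat.div_mul_cancel hdvd]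
    intro u hu
    rcases hu with h | h | h <;> subst h <;>
      simp only [hDfdef, if_pos rfl, if_neg (by omega : ¬ k+2 = k+1),
        if_neg (by omega : ¬ k+3 = k+1), if_neg (by omega : ¬ k+3 = k+2)]
    · exact scale _ _ _ hl1 ⟨l2 * l3, by ring⟩ hD1
    · exact scale _ _ _ hl2 ⟨l1 * l3, by ring⟩ hD2
    · exact scale _ _ _ hl3 ⟨l1 * l2, by ring⟩ hD3
  refine ⟨m + (m+1) * L, max v₀ 2, fun v hv => ?_⟩
  have hv2 : 2 ≤ v := le_trans (le_max_right _ _) hv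
  obtain ⟨B, hB, hBcard⟩ := hv₀ v (le_trans (le_max_left _ _) hv)
  set BL := B.toList with hBLdef
  set b := BL.length with hbdef
  set g : ℕ → Finset ℕ := fun i => BL.getD i ∅ with hgdef
  have hBL : (BL : Multiset (Finset ℕ)) = B := Multiset.coe_toList B
  have hgmem : ∀ i < b, g i ∈ B := by
    intro i hi
    rw [← hBL, hgdef]
    simp only [List.getD_eq_getElem _ _ hi]
    exact List.getElem_mem hi
  -- every pair of range v is in exactly one indexed block
  have hunique : ∀ T ∈ (Finset.range v).powersetCard 2,
      ∃ i₀, (Finset.range b).filter (fun i => T ⊆ g i) = {i₀} := by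
    intro T hT
    apply Finset.card_eq_one.1
    have h1 : freq B T = 1 := hB.2 T hT
    have hlist : BL = (List.range b).map g := by
      apply List.ext_getElem (by simp [hbdef])
      intro i h1 h2
      simp only [List.getElem_map, List.getElem_range, hgdef,
        List.getD_eq_getElem _ _ h1]
    have : freq B T = ((Finset.range b).filter (fun i => T ⊆ g i)).card := by
      rw [← hBL, hlist, freq]
      rw [show ((List.range b).map g : Multiset (Finset ℕ))
          = Multiset.map g (Multiset.range b) from rfl]
      rw [Multiset.filter_map, Multiset.card_map]
      rfl
    rw [this] at h1
    exact h1
  -- embedding of range (#K) into K, extended injectively to all of ℕ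
  set emb : Finset ℕ → ℕ → ℕ :=
    fun K n => if h : n < K.card then K.orderEmbOfFin rfl ⟨n, h⟩ else v + n with hembdef
  have hembd : ∀ K n, emb K n = if h : n < K.card then K.orderEmbOfFin rfl ⟨n, h⟩ else v + n :=
    fun K n => rfl
  have hembmem : ∀ K, ∀ n, ∀ h : n < K.card, emb K n ∈ K := by
    intro K n h
    rw [hembd, dif_pos h]
    exact Finset.orderEmbOfFin_mem K rfl ⟨n, h⟩
  have hembinj : ∀ K, K ⊆ Finset.range v → Function.Injective (emb K) := by
    intro K hK
    have hsm : StrictMono (emb K) := by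
      intro a c hac
      by_cases hc : c < K.card
      · have ha : a < K.card := hac.trans hc
        rw [hembd, dif_pos ha, hembd, dif_pos hc]
        exact (K.orderEmbOfFin rfl).strictMono (Fin.mk_lt_mk.2 hac)
      · by_cases ha : a < K.card
        · have h2 : emb K a < v := Finset.mem_range.1 (hK (hembmem K a ha))
          have h3 : emb K c = v + c := by rw [hembd, dif_neg hc]
          omega
        · have h3 : emb K c = v + c := by rw [hembd, dif_neg hc]
          have h4 : emb K a = v + a := by rw [hembd, dif_neg ha]
          omega
    exact hsm.injective
  have hembsurj : ∀ K, ∀ t ∈ K, ∃ n, ∃ h : n < K.card, emb K n = t := by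
    intro K t ht
    have hr := Finset.range_orderEmbOfFin K (rfl : K.card = K.card)
    have ht' : t ∈ Set.range (K.orderEmbOfFin rfl) := by rw [hr]; exact ht
    obtain ⟨⟨n, hn⟩, hne⟩ := ht'
    exact ⟨n, hn, by rw [hembd, dif_pos hn]; exact hne⟩
  have himg : ∀ K, (Finset.range K.card).image (emb K) = K := by
    intro K
    apply Finset.Subset.antisymm
    · intro t ht
      obtain ⟨n, hn, rfl⟩ := Finset.mem_image.1 ht
      exact hembmem K n (Finset.mem_range.1 hn)
    · intro t ht
      obtain ⟨n, hn, he⟩ := hembsurj K t ht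
      exact Finset.mem_image.2 ⟨n, Finset.mem_range.2 hn, he⟩
  -- the construction
  set piece : ℕ → Multiset (Finset ℕ) := fun i =>
    (Af (g i).card).map (Finset.image (emb (g i))) +
      (i * (m+1)) • ((Df (g i).card).map (Finset.image (emb (g i)))) with hpiecedef
  set A : Multiset (Finset ℕ) := ∑ i ∈ Finset.range b, piece i with hAdef
  have hcardopts : ∀ i < b, (g i).card = k+1 ∨ (g i).card = k+2 ∨ (g i).card = k+3 :=
    fun i hi => hBcard _ (hgmem i hi)
  have hgsub : ∀ i < b, g i ⊆ Finset.range v := fun i hi => hB.1 _ (hgmem i hi)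
  have hP1 : ∀ i < b, ∀ K' ∈ piece i, K' ⊆ g i ∧ K'.card = k := by
    intro i hi K' hK'
    have hinj := hembinj _ (hgsub i hi)
    have key : ∀ S : Finset ℕ, S ⊆ Finset.range (g i).card → S.card = k →
        S.image (emb (g i)) ⊆ g i ∧ (S.image (emb (g i))).card = k := by
      intro S h1 h2
      refine ⟨?_, by rw [Finset.card_image_of_injective _ hinj, h2]⟩
      intro t ht
      obtain ⟨n, hn, rfl⟩ := Finset.mem_image.1 ht
      exact hembmem _ n (Finset.mem_range.1 (h1 hn))
    simp only [hpiecedef] at hK'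
    rcases Multiset.mem_add.1 hK' with h | h
    · obtain ⟨S, hS, rfl⟩ := Multiset.mem_map.1 h
      have hS' := (hAf _ (hcardopts i hi)).1.1 S hS
      exact key S hS'.1 hS'.2
    · obtain ⟨S, hS, rfl⟩ := Multiset.mem_map.1 (Multiset.mem_nsmul.1 h).2
      have hS' := (hDf _ (hcardopts i hi)).1 S hS
      exact key S hS'.1 hS'.2
  have hP2 : ∀ i < b, ∀ T, ¬ T ⊆ g i → freq (piece i) T = 0 := by
    intro i hi T hT
    exact freq_eq_zero _ _ (fun K' hK' hsub => hT (hsub.trans (hP1 i hi K' hK').1))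
  have hP3 : ∀ i < b, ∀ T, T ⊆ g i → T.card = 2 →
      ∃ T' ∈ (Finset.range (g i).card).powersetCard 2,
        T'.image (emb (g i)) = T ∧
        freq (piece i) T = freq (Af (g i).card) T' + i * ((m+1) * L) := by
    intro i hi T hTsub hTcard
    have hinj := hembinj _ (hgsub i hi)
    have hTim : T ⊆ (Finset.range (g i).card).image (emb (g i)) := by
      rw [himg]; exact hTsub
    obtain ⟨T', hT'sub, hT'img⟩ := Finset.subset_image_iff.1 hTim
    have hT'card : T'.card = 2 := by
      rw [← hTcard, ← hT'img, Finset.card_image_of_injective _ hinj]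
    have hT'mem : T' ∈ (Finset.range (g i).card).powersetCard 2 :=
      Finset.mem_powersetCard.2 ⟨hT'sub, hT'card⟩
    refine ⟨T', hT'mem, hT'img, ?_⟩
    simp only [hpiecedef]
    rw [freq_add, freq_nsmul, ← hT'img, freq_map_image _ hinj, freq_map_image _ hinj,
      (hDf _ (hcardopts i hi)).2 T' hT'mem]
    ring
  -- the frequency formula
  have hformula : ∀ T ∈ (Finset.range v).powersetCard 2,
      ∃ i₀, i₀ < b ∧ ∃ a, a ≤ m ∧ freq A T = a + i₀ * ((m+1) * L) ∧
        ∃ T' ∈ (Finset.range (g i₀).card).powersetCard 2,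
          T'.image (emb (g i₀)) = T ∧ a = freq (Af (g i₀).card) T' := by
    intro T hT
    obtain ⟨i₀, hi₀⟩ := hunique T hT
    have hi₀mem : i₀ ∈ (Finset.range b).filter (fun i => T ⊆ g i) := by
      rw [hi₀]; exact Finset.mem_singleton_self i₀
    have hi₀b : i₀ < b := Finset.mem_range.1 (Finset.mem_filter.1 hi₀mem).1
    have hi₀sub : T ⊆ g i₀ := (Finset.mem_filter.1 hi₀mem).2
    obtain ⟨hTsub, hTcard⟩ := Finset.mem_powersetCard.1 hT
    obtain ⟨T', hT'mem, hT'img, hfr⟩ := hP3 i₀ hi₀b T hi₀sub hTcard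
    have hfrA : freq A T = freq (piece i₀) T := by
      rw [hAdef, freq_sum]
      apply Finset.sum_eq_single_of_mem i₀ (Finset.mem_range.2 hi₀b)
      intro j hj hne
      apply hP2 j (Finset.mem_range.1 hj) T
      intro hsub
      have hjf : j ∈ (Finset.range b).filter (fun i => T ⊆ g i) :=
        Finset.mem_filter.2 ⟨hj, hsub⟩
      rw [hi₀] at hjf
      exact hne (Finset.mem_singleton.1 hjf)
    exact ⟨i₀, hi₀b, freq (Af (g i₀).card) T',
      le_trans (freq_le_card _ _) (hAf _ (hcardopts i₀ hi₀b)).2,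
      by rw [hfrA, hfr], T', hT'mem, hT'img, rfl⟩
  -- A is an adesign
  have hX : m < (m+1) * L :=
    lt_of_lt_of_le (Nat.lt_succ_self m) (Nat.le_mul_of_pos_right _ hLpos)
  have key : ∀ i j ai aj : ℕ, ai ≤ m → i < j →
      ai + i * ((m+1)*L) < aj + j * ((m+1)*L) := by
    intro i j ai aj hai hij
    have h2 : i * ((m+1)*L) + (m+1)*L ≤ j * ((m+1)*L) := by
      calc i * ((m+1)*L) + (m+1)*L = (i+1) * ((m+1)*L) := by ring
      _ ≤ j * ((m+1)*L) := Nat.mul_le_mul_right _ hij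
    have h3 : ai < (m+1) * L := lt_of_le_of_lt hai hX
    calc ai + i * ((m+1)*L) < (m+1)*L + i * ((m+1)*L) := by omega
    _ ≤ j * ((m+1)*L) := by omega
    _ ≤ aj + j * ((m+1)*L) := Nat.le_add_left _ _
  have hAdesign : IsAdesign 2 k v A := by
    constructor
    · intro K' hK'
      rw [hAdef] at hK'
      obtain ⟨i, hi, hKi⟩ := Multiset.mem_sum.1 hK'
      have hi' := Finset.mem_range.1 hi
      obtain ⟨h1, h2⟩ := hP1 i hi' K' hKi
      exact ⟨h1.trans (hgsub i hi'), h2⟩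
    · intro T₁ hT₁ T₂ hT₂ hfr
      obtain ⟨i₁, hi₁, a₁, ha₁, he₁, T₁', hT₁'mem, hT₁'img, ha₁'⟩ := hformula T₁ hT₁
      obtain ⟨i₂, hi₂, a₂, ha₂, he₂, T₂', hT₂'mem, hT₂'img, ha₂'⟩ := hformula T₂ hT₂
      rw [he₁, he₂] at hfr
      have hii : i₁ = i₂ := by
        rcases Nat.lt_trichotomy i₁ i₂ with h | h | h
        · exact absurd hfr (Nat.ne_of_lt (key _ _ _ _ ha₁ h))
        · exact h
        · exact absurd hfr.symm (Nat.ne_of_lt (key _ _ _ _ ha₂ h))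
      subst hii
      have haa : a₁ = a₂ := Nat.add_right_cancel hfr
      have hTT : T₁' = T₂' :=
        (hAf _ (hcardopts i₁ hi₁)).1.2 T₁' hT₁'mem T₂' hT₂'mem
          (by rw [← ha₁', ← ha₂', haa])
      rw [← hT₁'img, ← hT₂'img, hTT]
  -- bound on the number of blocks
  have hble : b ≤ v ^ 2 := by
    have hcount : (B : Multiset (Finset ℕ)) ≤
        ∑ T ∈ (Finset.range v).powersetCard 2, B.filter (fun K => T ⊆ K) := by
      rw [Multiset.le_iff_count]
      intro K
      rw [Multiset.count_sum']
      by_cases hKB : K ∈ B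
      · obtain ⟨T₀, hT₀sub, hT₀card⟩ := Finset.exists_subset_card_eq
          (show 2 ≤ K.card by rcases hBcard K hKB with h|h|h <;> omega)
        have hT₀mem : T₀ ∈ (Finset.range v).powersetCard 2 :=
          Finset.mem_powersetCard.2 ⟨hT₀sub.trans (hB.1 K hKB), hT₀card⟩
        have hle : Multiset.count K B ≤
            Multiset.count K (B.filter (fun K' => T₀ ⊆ K')) := by
          rw [Multiset.count_filter, if_pos hT₀sub]
        exact le_trans hle (Finset.single_le_sum
          (f := fun T => Multiset.count K (Multiset.filter (fun K' => T ⊆ K') B))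
          (fun T _ => Nat.zero_le _) hT₀mem)
      · simp [Multiset.count_eq_zero_of_notMem hKB]
    have h2 : b = Multiset.card B := by rw [hbdef, hBLdef, Multiset.length_toList]
    have h3 : Multiset.card B ≤ ∑ T ∈ (Finset.range v).powersetCard 2,
        Multiset.card (B.filter (fun K => T ⊆ K)) := by
      rw [← card_msum]; exact Multiset.card_le_card hcount
    have h4 : ∀ T ∈ (Finset.range v).powersetCard 2,
        Multiset.card (B.filter (fun K => T ⊆ K)) = 1 := fun T hT => hB.2 T hT
    rw [Finset.sum_congr rfl h4, Finset.sum_const, smul_eq_mul, mul_one] at h3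
    have h5 : ((Finset.range v).powersetCard 2).card = Nat.choose v 2 := by
      rw [Finset.card_powersetCard, Finset.card_range]
    have h6 : Nat.choose v 2 ≤ v ^ 2 := by
      rw [Nat.choose_two_right, pow_two]
      calc v * (v-1) / 2 ≤ v * (v-1) := Nat.div_le_self _ _
      _ ≤ v * v := Nat.mul_le_mul_left v (Nat.sub_le v 1)
    rw [h2]
    exact le_trans h3 (le_trans (le_of_eq h5) h6)
  -- conclude
  apply Nat.sInf_le
  refine ⟨A, hAdesign, ?_⟩
  intro T hT
  obtain ⟨i₀, hi₀b, a, ha, he, -⟩ := hformula T hT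
  rw [he]
  have h1 : i₀ * ((m+1)*L) ≤ v^2 * ((m+1)*L) :=
    Nat.mul_le_mul_right _ (le_trans (le_of_lt hi₀b) hble)
  have hm : m ≤ m * v^2 :=
    Nat.le_mul_of_pos_right m (pow_pos (by omega : 0 < v) 2)
  calc a + i₀ * ((m+1)*L) ≤ m + v^2 * ((m+1)*L) := Nat.add_le_add ha h1
  _ = m + (m+1)*L * v^2 := by ring
  _ ≤ m * v^2 + (m+1)*L * v^2 := Nat.add_le_add_right hm _
  _ = (m + (m+1) * L) * v ^ 2 := by ring
end

section
/- Let t ≥ 2, k > 2t + 2. For all sufficiently large v there exists a 2-parameter family: a t-adesign A(t,k,v) whose maximum t-subset frequency is at most 16 t v^{2t+2} log v. Hence μ(t,k,v) ≤ 16 t v^{2t+2} log v for sufficiently large v. -/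
open Finset

namespace Stmt19Aux

noncomputable def padList (d W : ℕ) (S : Finset ℕ) : List (Finset ℕ) :=
  ((Finset.range W \ S).powersetCard d).toList

noncomputable def pad (d W : ℕ) (S : Finset ℕ) : Finset ℕ :=
  (padList d W S).getD (S.sum id % (padList d W S).length) ∅

noncomputable def blk (d W : ℕ) (S : Finset ℕ) : Finset ℕ := S ∪ pad d W S

lemma length_padList (d W : ℕ) (S : Finset ℕ) :
    (padList d W S).length = (Finset.range W \ S).card.choose d := by
  rw [padList, Finset.length_toList, Finset.card_powersetCard]

lemma pad_mem {d W : ℕ} {S : Finset ℕ} (h : d ≤ (Finset.range W \ S).card) :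
    pad d W S ∈ (Finset.range W \ S).powersetCard d := by
  have hpos : 0 < (padList d W S).length := by
    rw [length_padList]; exact Nat.choose_pos h
  rw [pad, List.getD_eq_getElem _ _ (Nat.mod_lt _ hpos)]
  exact Finset.mem_toList.mp (List.getElem_mem _)

lemma pad_subset {d W : ℕ} {S : Finset ℕ} (h : d ≤ (Finset.range W \ S).card) :
    pad d W S ⊆ Finset.range W \ S :=
  (Finset.mem_powersetCard.mp (pad_mem h)).1

lemma pad_card {d W : ℕ} {S : Finset ℕ} (h : d ≤ (Finset.range W \ S).card) :
    (pad d W S).card = d :=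
  (Finset.mem_powersetCard.mp (pad_mem h)).2

lemma pad_disjoint {d W : ℕ} {S : Finset ℕ} (h : d ≤ (Finset.range W \ S).card) :
    Disjoint S (pad d W S) := by
  rw [Finset.disjoint_right]
  intro a ha
  exact (Finset.mem_sdiff.mp (pad_subset h ha)).2

lemma blk_card {d W : ℕ} {S : Finset ℕ} (h : d ≤ (Finset.range W \ S).card) :
    (blk d W S).card = S.card + d := by
  rw [blk, Finset.card_union_of_disjoint (pad_disjoint h), pad_card h]

lemma pad_eq {d W : ℕ} {S E : Finset ℕ} (hdisj : Disjoint (Finset.range W) S)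
    (hE : E ∈ (Finset.range W).powersetCard d)
    (hsum : S.sum id % ((Finset.range W).powersetCard d).toList.length
          = ((Finset.range W).powersetCard d).toList.idxOf E) :
    pad d W S = E := by
  have hre : Finset.range W \ S = Finset.range W :=
    Finset.sdiff_eq_self_iff_disjoint.mpr hdisj
  have hmem : E ∈ ((Finset.range W).powersetCard d).toList := Finset.mem_toList.mpr hE
  have hlt := List.idxOf_lt_length_iff.mpr hmem
  rw [pad, padList, hre, hsum, List.getD_eq_getElem _ _ hlt, List.getElem_idxOf hlt]

lemma room {t k : ℕ} (htk : t ≤ k) {S : Finset ℕ} (hcard : S.card = t) :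
    k - t ≤ (Finset.range (2*k) \ S).card := by
  have h := Finset.le_card_sdiff S (Finset.range (2*k))
  rw [Finset.card_range, hcard] at h
  omega

lemma mod_steer {L r i : ℕ} (hL : 0 < L) (hi : i < L) (hr : r < L) :
    (r + (i + L - r) % L) % L = i := by
  have h1 : (r + (i + L - r) % L) % L = (r + (i + L - r)) % L := by
    rw [Nat.add_mod, Nat.mod_mod_of_dvd _ dvd_rfl, ← Nat.add_mod]
  have h2 : r + (i + L - r) = i + L := by omega
  rw [h1, h2, Nat.add_mod_right, Nat.mod_eq_of_lt hi]

lemma sep_high {t k v : ℕ} (htk : t ≤ k) {T₁ T₂ : Finset ℕ}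
    (hT₁ : T₁ ∈ (range v).powersetCard t) {x : ℕ}
    (hx2 : x ∈ T₂) (hx1 : x ∉ T₁) (hxW : 2*k ≤ x) :
    T₁ ⊆ blk (k-t) (2*k) T₁ ∧ ¬ T₂ ⊆ blk (k-t) (2*k) T₁ := by
  obtain ⟨hsub, hcard⟩ := mem_powersetCard.mp hT₁
  have hroom := room htk hcard
  refine ⟨Finset.subset_union_left, fun hc => ?_⟩
  have hx := hc hx2
  rw [blk, Finset.mem_union] at hx
  rcases hx with h | h
  · exact hx1 h
  · have hlt := Finset.mem_range.mp (Finset.mem_sdiff.mp (pad_subset hroom h)).1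
    omega

lemma sep_low {t k v : ℕ} (ht : 2 ≤ t) (hk : 2*t + 2 < k)
    (hv : 2*k + 3*t + (2*t+2) * Nat.choose (2*k) (k-t) + 2^k + 10 ≤ v)
    {T₁ T₂ : Finset ℕ}
    (hT₁ : T₁ ∈ (range v).powersetCard t) (hT₂ : T₂ ∈ (range v).powersetCard t)
    {x : ℕ} (hx2 : x ∈ T₂) (hx1 : x ∉ T₁) (hxW : x < 2*k)
    (hLOW : (T₁ ∩ range (2*k)).Nonempty) :
    ∃ S ∈ (range v).powersetCard t, T₁ ⊆ blk (k-t) (2*k) S ∧ ¬ T₂ ⊆ blk (k-t) (2*k) S := by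
  obtain ⟨hT₁sub, hT₁card⟩ := mem_powersetCard.mp hT₁
  obtain ⟨hT₂sub, hT₂card⟩ := mem_powersetCard.mp hT₂
  have h2pow : 1 ≤ 2^k := Nat.one_le_two_pow
  have hb1 : 1 ≤ (T₁ ∩ range (2*k)).card := Finset.card_pos.mpr hLOW
  have hbt : (T₁ ∩ range (2*k)).card ≤ t := by
    rw [← hT₁card]; exact Finset.card_le_card Finset.inter_subset_left
  have hHIb : (T₁ \ range (2*k)).card + (T₁ ∩ range (2*k)).card = t := by
    rw [Finset.card_sdiff_add_card_inter, hT₁card]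
  -- choose the extra part E' of the target pad
  have hcard1 : (k - t) - (T₁ ∩ range (2*k)).card
      ≤ (range (2*k) \ insert x (T₁ ∩ range (2*k))).card := by
    have h := Finset.le_card_sdiff (insert x (T₁ ∩ range (2*k))) (range (2*k))
    have h2 : (insert x (T₁ ∩ range (2*k))).card ≤ (T₁ ∩ range (2*k)).card + 1 :=
      Finset.card_insert_le _ _
    rw [Finset.card_range] at h
    omega
  obtain ⟨E', hE'sub, hE'card⟩ := Finset.exists_subset_card_eq hcard1
  have hE'LOW : Disjoint (T₁ ∩ range (2*k)) E' := by
    rw [Finset.disjoint_right]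
    intro a ha hcon
    exact (Finset.mem_sdiff.mp (hE'sub ha)).2 (Finset.mem_insert_of_mem hcon)
  have hEstarcard : ((T₁ ∩ range (2*k)) ∪ E').card = k - t := by
    rw [Finset.card_union_of_disjoint hE'LOW, hE'card]
    omega
  have hEstarmem : (T₁ ∩ range (2*k)) ∪ E' ∈ (range (2*k)).powersetCard (k-t) := by
    rw [Finset.mem_powersetCard]
    exact ⟨Finset.union_subset Finset.inter_subset_right
      (hE'sub.trans Finset.sdiff_subset), hEstarcard⟩
  have hxEstar : x ∉ (T₁ ∩ range (2*k)) ∪ E' := by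
    rw [Finset.mem_union]
    rintro (h | h)
    · exact hx1 (Finset.mem_inter.mp h).1
    · exact (Finset.mem_sdiff.mp (hE'sub h)).2 (Finset.mem_insert_self _ _)
  set Estar := (T₁ ∩ range (2*k)) ∪ E' with hEstardef
  -- the list of candidate pads and the target index
  set lst := ((range (2*k)).powersetCard (k-t)).toList with hlst
  have hLval : lst.length = Nat.choose (2*k) (k-t) := by
    rw [hlst, Finset.length_toList, Finset.card_powersetCard, Finset.card_range]
  have hLpos : 0 < lst.length := by
    rw [hLval]; exact Nat.choose_pos (by omega)
  have hiL : lst.idxOf Estar < lst.length :=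
    List.idxOf_lt_length_iff.mpr (Finset.mem_toList.mpr hEstarmem)
  set i := lst.idxOf Estar with hidef
  set L := lst.length with hLdef
  -- choose the low filler Z₀
  have hFcard : (T₁ ∩ range (2*k)).card - 1
      ≤ (range (2*k + 3*t) \ (range (2*k) ∪ T₁ ∪ T₂)).card := by
    have h := Finset.le_card_sdiff (range (2*k) ∪ T₁ ∪ T₂) (range (2*k + 3*t))
    have h2 : (range (2*k) ∪ T₁ ∪ T₂).card ≤ 2*k + t + t := by
      calc (range (2*k) ∪ T₁ ∪ T₂).card
          ≤ (range (2*k) ∪ T₁).card + T₂.card := Finset.card_union_le _ _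
        _ ≤ (range (2*k)).card + T₁.card + T₂.card := by
            have := Finset.card_union_le (range (2*k)) T₁; omega
        _ = 2*k + t + t := by rw [Finset.card_range, hT₁card, hT₂card]
    rw [Finset.card_range] at h
    omega
  obtain ⟨Z₀, hZ₀sub, hZ₀card⟩ := Finset.exists_subset_card_eq hFcard
  have hZ₀spec : ∀ y ∈ Z₀, 2*k ≤ y ∧ y < 2*k + 3*t ∧ y ∉ T₁ ∧ y ∉ T₂ := by
    intro y hy
    have h := Finset.mem_sdiff.mp (hZ₀sub hy)
    have h1 := Finset.mem_range.mp h.1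
    have h2 := h.2
    rw [Finset.mem_union, Finset.mem_union] at h2
    push_neg at h2
    refine ⟨?_, h1, h2.1.2, h2.2⟩
    by_contra hcon
    exact h2.1.1 (Finset.mem_range.mpr (by omega))
  -- choose the steering element z
  set a := (∑ y ∈ T₁ \ range (2*k), y) + (∑ y ∈ Z₀, y) + (2*k + 3*t) with hadef
  set off := (i + L - a % L) % L with hoffdef
  have hofflt : off < L := Nat.mod_lt _ hLpos
  have hzcinj : Function.Injective (fun j => 2*k + 3*t + off + L * j) := by
    intro j₁ j₂ h
    simp only at h
    have hLL : L * j₁ = L * j₂ := by omega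
    exact Nat.eq_of_mul_eq_mul_left hLpos hLL
  have hzcard : ((range (2*t+1)).image (fun j => 2*k + 3*t + off + L * j)).card = 2*t+1 := by
    rw [Finset.card_image_of_injective _ hzcinj, Finset.card_range]
  have hpick : (((range (2*t+1)).image (fun j => 2*k + 3*t + off + L * j)) \ (T₁ ∪ T₂)).Nonempty := by
    rw [← Finset.card_pos]
    have h := Finset.le_card_sdiff (T₁ ∪ T₂)
      ((range (2*t+1)).image (fun j => 2*k + 3*t + off + L * j))
    have h2 : (T₁ ∪ T₂).card ≤ 2*t := by
      have h3 := Finset.card_union_le T₁ T₂; omega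
    omega
  obtain ⟨z, hz⟩ := hpick
  rw [Finset.mem_sdiff] at hz
  obtain ⟨hzc_mem, hzT⟩ := hz
  rw [Finset.mem_union] at hzT; push_neg at hzT
  obtain ⟨j, hjmem, hjz⟩ := Finset.mem_image.mp hzc_mem
  rw [Finset.mem_range] at hjmem
  -- the root set S
  set S := insert z ((T₁ \ range (2*k)) ∪ Z₀) with hSdef
  have hHIhigh : ∀ y ∈ T₁ \ range (2*k), 2*k ≤ y := by
    intro y hy
    have h := (Finset.mem_sdiff.mp hy).2
    by_contra hcon
    exact h (Finset.mem_range.mpr (by omega))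
  have hzbase : 2*k + 3*t ≤ z := by omega
  have hzout : z ∉ (T₁ \ range (2*k)) ∪ Z₀ := by
    rw [Finset.mem_union]
    rintro (h | h)
    · exact hzT.1 (Finset.sdiff_subset h)
    · have := (hZ₀spec z h).2.1; omega
  have hdisjHIZ : Disjoint (T₁ \ range (2*k)) Z₀ := by
    rw [Finset.disjoint_left]
    intro y hy hcon
    exact (hZ₀spec y hcon).2.2.1 (Finset.sdiff_subset hy)
  have hScard : S.card = t := by
    rw [hSdef, Finset.card_insert_of_notMem hzout,
      Finset.card_union_of_disjoint hdisjHIZ, hZ₀card]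
    omega
  have hzv : z < v := by
    have h1 : L * j ≤ L * (2*t) := Nat.mul_le_mul_left _ (by omega)
    have h2 : z ≤ 2*k + 3*t + (L - 1) + L * (2*t) := by omega
    have h3 : 2*k + 3*t + (L - 1) + L * (2*t) < 2*k + 3*t + (2*t + 2) * L := by
      have e : (2*t+2) * L = L * (2*t) + L + L := by ring
      omega
    have h4 : 2*k + 3*t + (2*t+2) * L ≤ v := by
      rw [hLval]; omega
    omega
  have hSsubv : S ⊆ range v := by
    intro y hy
    rw [hSdef, Finset.mem_insert, Finset.mem_union] at hy
    rcases hy with rfl | h | h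
    · exact Finset.mem_range.mpr hzv
    · exact hT₁sub (Finset.sdiff_subset h)
    · have := (hZ₀spec y h).2.1
      rw [Finset.mem_range]
      omega
  have hSmem : S ∈ (range v).powersetCard t := Finset.mem_powersetCard.mpr ⟨hSsubv, hScard⟩
  have hSge : ∀ y ∈ S, 2*k ≤ y := by
    intro y hy
    rw [hSdef, Finset.mem_insert, Finset.mem_union] at hy
    rcases hy with rfl | h | h
    · omega
    · exact hHIhigh y h
    · exact (hZ₀spec y h).1
  have hSdisjW : Disjoint (range (2*k)) S := by
    rw [Finset.disjoint_left]
    intro y hy hcon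
    have h1 := Finset.mem_range.mp hy
    have h2 := hSge y hcon
    omega
  have hSsum : S.sum id = a + off + L * j := by
    rw [hSdef, Finset.sum_insert hzout, Finset.sum_union hdisjHIZ]
    simp only [id_eq]
    omega
  have hmod : S.sum id % L = i := by
    rw [hSsum, Nat.add_mul_mod_self_left, Nat.add_mod, Nat.mod_eq_of_lt hofflt, hoffdef]
    exact mod_steer hLpos hiL (Nat.mod_lt _ hLpos)
  rw [hidef, hLdef, hlst] at hmod
  have hpadS : pad (k-t) (2*k) S = Estar := pad_eq hSdisjW hEstarmem hmod
  refine ⟨S, hSmem, ?_, ?_⟩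
  · intro y hy
    rw [blk, Finset.mem_union]
    by_cases hyW : y < 2*k
    · right
      rw [hpadS, hEstardef, Finset.mem_union]
      left
      exact Finset.mem_inter.mpr ⟨hy, Finset.mem_range.mpr hyW⟩
    · left
      rw [hSdef, Finset.mem_insert, Finset.mem_union]
      right; left
      exact Finset.mem_sdiff.mpr ⟨hy, fun hc => hyW (Finset.mem_range.mp hc)⟩
  · intro hcon
    have hx := hcon hx2
    rw [blk, Finset.mem_union] at hx
    rcases hx with h | h
    · have := hSge x h; omega
    · rw [hpadS] at h
      exact hxEstar h

/-- Combined separation : for distinct `t`-subsets, some block contains exactly one. -/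
lemma separation {t k v : ℕ} (ht : 2 ≤ t) (hk : 2*t + 2 < k)
    (hv : 2*k + 3*t + (2*t+2) * Nat.choose (2*k) (k-t) + 2^k + 10 ≤ v)
    {T₁ T₂ : Finset ℕ}
    (hT₁ : T₁ ∈ (range v).powersetCard t) (hT₂ : T₂ ∈ (range v).powersetCard t)
    (hne : T₁ ≠ T₂) :
    ∃ S ∈ (range v).powersetCard t,
      ((T₁ ⊆ blk (k-t) (2*k) S ∧ ¬ T₂ ⊆ blk (k-t) (2*k) S) ∨
       (T₂ ⊆ blk (k-t) (2*k) S ∧ ¬ T₁ ⊆ blk (k-t) (2*k) S)) := by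
  have htk : t ≤ k := by omega
  obtain ⟨hT₁sub, hT₁card⟩ := mem_powersetCard.mp hT₁
  obtain ⟨hT₂sub, hT₂card⟩ := mem_powersetCard.mp hT₂
  have h21 : (T₂ \ T₁).Nonempty := by
    rw [Finset.sdiff_nonempty]
    intro hcon
    exact hne (Finset.eq_of_subset_of_card_le hcon (by omega)).symm
  have h12 : (T₁ \ T₂).Nonempty := by
    rw [Finset.sdiff_nonempty]
    intro hcon
    exact hne (Finset.eq_of_subset_of_card_le hcon (by omega))
  by_cases hc1 : ∃ x ∈ T₂ \ T₁, 2*k ≤ x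
  · obtain ⟨x, hx, hxk⟩ := hc1
    rw [Finset.mem_sdiff] at hx
    exact ⟨T₁, hT₁, Or.inl (sep_high htk hT₁ hx.1 hx.2 hxk)⟩
  by_cases hc2 : ∃ x ∈ T₁ \ T₂, 2*k ≤ x
  · obtain ⟨x, hx, hxk⟩ := hc2
    rw [Finset.mem_sdiff] at hx
    exact ⟨T₂, hT₂, Or.inr (sep_high htk hT₂ hx.1 hx.2 hxk)⟩
  push_neg at hc1 hc2
  obtain ⟨x, hx⟩ := h21
  rw [Finset.mem_sdiff] at hx
  have hxW : x < 2*k := hc1 x (Finset.mem_sdiff.mpr hx)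
  obtain ⟨y, hy⟩ := h12
  rw [Finset.mem_sdiff] at hy
  have hyW : y < 2*k := hc2 y (Finset.mem_sdiff.mpr hy)
  have hLOW : (T₁ ∩ range (2*k)).Nonempty :=
    ⟨y, Finset.mem_inter.mpr ⟨hy.1, Finset.mem_range.mpr hyW⟩⟩
  obtain ⟨S, hS, h1, h2⟩ := sep_low ht hk hv hT₁ hT₂ hx.1 hx.2 hxW hLOW
  exact ⟨S, hS, Or.inl ⟨h1, h2⟩⟩

/-- Greedy choice of multiplicities. -/
lemma greedy {t k v : ℕ} (ht : 2 ≤ t) (hk : 2*t + 2 < k)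
    (hv : 2*k + 3*t + (2*t+2) * Nat.choose (2*k) (k-t) + 2^k + 10 ≤ v) :
    ∀ P ⊆ (range v).powersetCard t,
      ∃ μ : Finset ℕ → ℕ,
        (∀ S ∈ P, μ S ∈ Finset.Icc 1 (k.choose t * ((range v).powersetCard t).card + 1)) ∧
        ∀ T₁ ∈ (range v).powersetCard t, ∀ T₂ ∈ (range v).powersetCard t, T₁ ≠ T₂ →
          (∀ S ∈ (range v).powersetCard t, S ∉ P →
            ((T₁ ⊆ blk (k-t) (2*k) S) ↔ (T₂ ⊆ blk (k-t) (2*k) S))) →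
          (∑ S ∈ P, if T₁ ⊆ blk (k-t) (2*k) S then μ S else 0) ≠
          (∑ S ∈ P, if T₂ ⊆ blk (k-t) (2*k) S then μ S else 0) := by
  intro P
  induction P using Finset.induction_on with
  | empty =>
    intro _
    refine ⟨fun _ => 1, by simp, ?_⟩
    intro T₁ hT₁ T₂ hT₂ hne hiff
    exfalso
    obtain ⟨S, hS, h⟩ := separation ht hk hv hT₁ hT₂ hne
    have := hiff S hS (Finset.notMem_empty S)
    tauto
  | @insert S₀ P hS₀P ih =>
    intro hsub
    have hS₀ : S₀ ∈ (range v).powersetCard t := hsub (Finset.mem_insert_self _ _)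
    have hPsub : P ⊆ (range v).powersetCard t := (Finset.subset_insert _ _).trans hsub
    obtain ⟨μ, hμI, hInv⟩ := ih hPsub
    have hS₀card : (blk (k-t) (2*k) S₀).card = k := by
      obtain ⟨hs1, hs2⟩ := mem_powersetCard.mp hS₀
      rw [blk_card (room (show t ≤ k by omega) hs2), hs2]
      omega
    set N := ((range v).powersetCard t).card with hN
    set R := k.choose t * N + 1 with hR
    set pf : Finset ℕ → ℕ := fun T => ∑ S ∈ P, if T ⊆ blk (k-t) (2*k) S then μ S else 0 with hpf
    set bad := (((blk (k-t) (2*k) S₀).powersetCard t) ×ˢ ((range v).powersetCard t)).image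
      (fun p => pf p.2 - pf p.1) with hbad
    have hbadcard : bad.card < R := by
      calc bad.card
          ≤ (((blk (k-t) (2*k) S₀).powersetCard t) ×ˢ ((range v).powersetCard t)).card :=
            Finset.card_image_le
        _ = k.choose t * N := by
            rw [Finset.card_product, Finset.card_powersetCard, hS₀card]
        _ < R := by omega
    have hex : ((Finset.Icc 1 R) \ bad).Nonempty := by
      rw [← Finset.card_pos]
      have h := Finset.le_card_sdiff bad (Finset.Icc 1 R)
      rw [Nat.card_Icc] at h
      omega
    obtain ⟨aa, haa⟩ := hex
    rw [Finset.mem_sdiff] at haa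
    obtain ⟨haI, habad⟩ := haa
    refine ⟨Function.update μ S₀ aa, ?_, ?_⟩
    · intro S hSmem
      rcases Finset.mem_insert.mp hSmem with rfl | hSP
      · rw [Function.update_self]; exact haI
      · rw [Function.update_of_ne (fun h => hS₀P (by rw [← h]; exact hSP))]; exact hμI S hSP
    · intro T₁ hT₁ T₂ hT₂ hne hiff
      have hre : ∀ T, (∑ S ∈ P, if T ⊆ blk (k-t) (2*k) S then Function.update μ S₀ aa S else 0)
          = pf T := by
        intro T
        apply Finset.sum_congr rfl
        intro S hSP
        rw [Function.update_of_ne (fun h => hS₀P (by rw [← h]; exact hSP))]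
      rw [Finset.sum_insert hS₀P, Finset.sum_insert hS₀P, hre, hre, Function.update_self]
      have hvac : ∀ (h1 : T₁ ⊆ blk (k-t) (2*k) S₀ ↔ T₂ ⊆ blk (k-t) (2*k) S₀), pf T₁ ≠ pf T₂ := by
        intro h1
        apply hInv T₁ hT₁ T₂ hT₂ hne
        intro S hSmem hSP
        by_cases hSS : S = S₀
        · subst hSS; exact h1
        · exact hiff S hSmem (fun hc => (Finset.mem_insert.mp hc).elim hSS hSP)
      by_cases h1 : T₁ ⊆ blk (k-t) (2*k) S₀ <;> by_cases h2 : T₂ ⊆ blk (k-t) (2*k) S₀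
      · rw [if_pos h1, if_pos h2]
        have hd := hvac (by simp [h1, h2])
        omega
      · rw [if_pos h1, if_neg h2]
        intro hcon
        apply habad
        rw [hbad]
        apply Finset.mem_image.mpr
        refine ⟨(T₁, T₂), ?_, ?_⟩
        · rw [Finset.mem_product]
          exact ⟨Finset.mem_powersetCard.mpr ⟨h1, (Finset.mem_powersetCard.mp hT₁).2⟩, hT₂⟩
        · show pf T₂ - pf T₁ = aa
          omega
      · rw [if_neg h1, if_pos h2]
        intro hcon
        apply habad
        rw [hbad]
        apply Finset.mem_image.mpr
        refine ⟨(T₂, T₁), ?_, ?_⟩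
        · rw [Finset.mem_product]
          exact ⟨Finset.mem_powersetCard.mpr ⟨h2, (Finset.mem_powersetCard.mp hT₂).2⟩, hT₁⟩
        · show pf T₁ - pf T₂ = aa
          omega
      · rw [if_neg h1, if_neg h2]
        have hd := hvac (by simp [h1, h2])
        omega

lemma freq_sum (μ : Finset ℕ → ℕ) (g : Finset ℕ → Finset ℕ) (P : Finset (Finset ℕ))
    (T : Finset ℕ) :
    freq (∑ S ∈ P, Multiset.replicate (μ S) (g S)) T
      = ∑ S ∈ P, if T ⊆ g S then μ S else 0 := by
  classical
  induction P using Finset.induction_on with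
  | empty => simp [freq]
  | @insert S₀ P h ih =>
    rw [Finset.sum_insert h, Finset.sum_insert h, freq, Multiset.filter_add,
      Multiset.card_add]
    rw [freq] at ih
    rw [ih]
    congr 1
    by_cases hT : T ⊆ g S₀
    · rw [if_pos hT, Multiset.filter_eq_self.mpr, Multiset.card_replicate]
      intro K hK
      rw [Multiset.eq_of_mem_replicate hK]
      exact hT
    · rw [if_neg hT, Multiset.filter_eq_nil.mpr, Multiset.card_zero]
      intro K hK
      rw [Multiset.eq_of_mem_replicate hK]
      exact hT

lemma construction {t k v : ℕ} (ht : 2 ≤ t) (hk : 2*t + 2 < k)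
    (hv : 2*k + 3*t + (2*t+2) * Nat.choose (2*k) (k-t) + 2^k + 10 ≤ v) :
    ∃ A : Multiset (Finset ℕ), IsAdesign t k v A ∧
      ∀ T ∈ (range v).powersetCard t, freq A T ≤ v^(2*t+2) := by
  classical
  have h2pow : 1 ≤ 2^k := Nat.one_le_pow k 2 (by norm_num)
  obtain ⟨μ, hμI, hInv⟩ := greedy ht hk hv ((range v).powersetCard t) (subset_refl _)
  refine ⟨∑ S ∈ (range v).powersetCard t, Multiset.replicate (μ S) (blk (k-t) (2*k) S),
    ⟨?_, ?_⟩, ?_⟩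
  · intro K hK
    obtain ⟨S, hS, hKmem⟩ := Multiset.mem_sum.mp hK
    obtain ⟨hSsub, hScard⟩ := Finset.mem_powersetCard.mp hS
    have hKeq : K = blk (k-t) (2*k) S := Multiset.eq_of_mem_replicate hKmem
    subst hKeq
    have hroom := room (show t ≤ k by omega) hScard
    constructor
    · intro y hy
      rw [blk, Finset.mem_union] at hy
      rcases hy with h | h
      · exact hSsub h
      · have h2 := (Finset.mem_sdiff.mp (pad_subset hroom h)).1
        rw [Finset.mem_range] at h2 ⊢
        omega
    · rw [blk_card hroom, hScard]; omega
  · intro T₁ hT₁ T₂ hT₂ heq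
    by_contra hne
    rw [freq_sum, freq_sum] at heq
    exact hInv T₁ hT₁ T₂ hT₂ hne (fun S hS hcon => absurd hS hcon) heq
  · intro T hT
    rw [freq_sum]
    have hstep : ∀ S ∈ (range v).powersetCard t,
        (if T ⊆ blk (k-t) (2*k) S then μ S else 0)
          ≤ k.choose t * ((range v).powersetCard t).card + 1 := by
      intro S hS
      have hm := hμI S hS
      rw [Finset.mem_Icc] at hm
      split <;> omega
    have hNv : ((range v).powersetCard t).card = Nat.choose v t := by
      rw [Finset.card_powersetCard, Finset.card_range]
    have hN : ((range v).powersetCard t).card ≤ v^t := by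
      rw [hNv]; exact Nat.choose_le_pow v t
    have hCk : k.choose t ≤ 2^k := by
      have hs := Nat.sum_range_choose k
      have hone : k.choose t ≤ ∑ m ∈ range (k+1), k.choose m :=
        Finset.single_le_sum (fun i _ => Nat.zero_le _) (Finset.mem_range.mpr (by omega))
      omega
    have hkv : 2^k ≤ v := by omega
    have hv2 : 2 ≤ v := by omega
    calc (∑ S ∈ (range v).powersetCard t, if T ⊆ blk (k-t) (2*k) S then μ S else 0)
        ≤ ((range v).powersetCard t).card
            • (k.choose t * ((range v).powersetCard t).card + 1) :=
          Finset.sum_le_card_nsmul _ _ _ hstep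
      _ = ((range v).powersetCard t).card
            * (k.choose t * ((range v).powersetCard t).card + 1) := by rw [smul_eq_mul]
      _ ≤ v^t * (v * v^t + 1) := by
          apply Nat.mul_le_mul hN
          have hmm : k.choose t * ((range v).powersetCard t).card ≤ v * v^t :=
            Nat.mul_le_mul (hCk.trans hkv) hN
          omega
      _ ≤ v^(2*t+2) := by
          have hX : 1 ≤ v^t := Nat.one_le_pow _ _ (by omega)
          have hpow : v^(2*t+2) = v^t * v^t * (v * v) := by
            rw [show 2*t+2 = t + t + 2 by ring, pow_add, pow_add]
            ring
          have hXX : v^t ≤ v^t * v^t := by nlinarith [hX]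
          have hvv : v + 1 ≤ v * v := by nlinarith [hv2]
          rw [hpow]
          calc v^t * (v * v^t + 1) = v * (v^t * v^t) + v^t := by ring
            _ ≤ v * (v^t * v^t) + v^t * v^t := by omega
            _ = (v + 1) * (v^t * v^t) := by ring
            _ ≤ (v * v) * (v^t * v^t) := Nat.mul_le_mul_right _ hvv
            _ = v^t * v^t * (v * v) := by ring

end Stmt19Aux

theorem stmt19 (t k : ℕ) (ht : 2 ≤ t) (hk : 2 * t + 2 < k) :
    ∃ v₀ : ℕ, ∀ v ≥ v₀,
      (∃ A : Multiset (Finset ℕ), IsAdesign t k v A ∧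
        ∀ T ∈ (Finset.range v).powersetCard t,
          (freq A T : ℝ) ≤ 16 * t * (v : ℝ) ^ (2 * t + 2) * Real.log v) ∧
      (mu t k v : ℝ) ≤ 16 * t * (v : ℝ) ^ (2 * t + 2) * Real.log v := by
  classical
  refine ⟨2*k + 3*t + (2*t+2) * Nat.choose (2*k) (k-t) + 2^k + 10, fun v hv => ?_⟩
  obtain ⟨A, hA, hbound⟩ := Stmt19Aux.construction ht hk hv
  have h2pow : 1 ≤ 2^k := Nat.one_le_pow k 2 (by norm_num)
  have hv10 : 10 ≤ v := by omega
  have hreal : ((v^(2*t+2) : ℕ) : ℝ) ≤ 16 * t * (v:ℝ)^(2*t+2) * Real.log v := by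
    have h3 : (3:ℝ) ≤ (v:ℝ) := by exact_mod_cast le_trans (by norm_num) hv10
    have hlog : 1 ≤ Real.log v := by
      rw [← Real.log_exp 1]
      apply Real.log_le_log (Real.exp_pos 1)
      nlinarith [Real.exp_one_lt_d9]
    have hpow0 : (0:ℝ) ≤ (v:ℝ)^(2*t+2) := by positivity
    have ht' : (2:ℝ) ≤ (t:ℝ) := by exact_mod_cast ht
    have hc : (1:ℝ) ≤ 16 * t * Real.log v := by nlinarith
    have hcast : ((v^(2*t+2) : ℕ) : ℝ) = (v:ℝ)^(2*t+2) := by push_cast; ring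
    rw [hcast]
    calc (v:ℝ)^(2*t+2) = (v:ℝ)^(2*t+2) * 1 := by ring
      _ ≤ (v:ℝ)^(2*t+2) * (16 * t * Real.log v) := by
          exact mul_le_mul_of_nonneg_left hc hpow0
      _ = 16 * t * (v:ℝ)^(2*t+2) * Real.log v := by ring
  constructor
  · refine ⟨A, hA, fun T hT => ?_⟩
    calc (freq A T : ℝ) ≤ ((v^(2*t+2) : ℕ) : ℝ) := by exact_mod_cast hbound T hT
      _ ≤ _ := hreal
  · have hmu : mu t k v ≤ v^(2*t+2) := Nat.sInf_le ⟨A, hA, hbound⟩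
    calc (mu t k v : ℝ) ≤ ((v^(2*t+2):ℕ):ℝ) := by exact_mod_cast hmu
      _ ≤ _ := hreal
end
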